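/- arXiv:1603.05072 — 3 statements merged into one kernel-verified Lean document; each statement's English description precedes it below -/
import Mathlib

section
/- For every finite MDP D = (S, s_init, A, δ, w) with strictly positive integer weights and every target set T ⊆ S, there exists a pure memoryless strategy σ* that is optimal for the expected truncated sum: for every strategy σ, E^{σ*}(TS^T) ≤ E^{σ}(TS^T) (expectations valued in [0,∞]). -/
open scoped NNReal ENNReal

/-- A finite Markov decision process: finite state space `S`, finite action space `A`,
an initial state, a nonempty set of available actions in each state, and a probabilistic
transition function (a probability distribution over successors for each available action). -/
structure MDP (S A : Type) [Fintype S] [Fintype A] where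
  init : S
  avail : S → Finset A
  avail_nonempty : ∀ s, (avail s).Nonempty
  tr : S → A → S → ℝ≥0
  tr_sum : ∀ s a, a ∈ avail s → ∑ s' : S, tr s a s' = 1

section Core

variable {S A : Type} [Fintype S] [Fintype A]

/-- A history `s₁ a₁ s₂ a₂ … a_{n-1} s_n` (with `s₁ = init`) is encoded as the
list of steps `[(a₁, s₂), …, (a_{n-1}, s_n)]`. -/
def lastState (M : MDP S A) (h : List (A × S)) : S :=
  (h.getLast?).elim M.init Prod.snd

/-- A (randomized, history-dependent) strategy: to every history it assigns a
probability distribution over actions. -/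
abbrev Strat (S A : Type) := List (A × S) → A → ℝ≥0

/-- The distributions prescribed by a strategy are supported on available actions and
sum up to one. -/
def IsStrategy (M : MDP S A) (σ : Strat S A) : Prop :=
  ∀ h : List (A × S),
    (∀ a, a ∉ M.avail (lastState M h) → σ h a = 0) ∧ ∑ a : A, σ h a = 1

/-- A strategy is pure if it always prescribes a Dirac distribution. -/
def IsPure (σ : Strat S A) : Prop := ∀ h, ∃ a, σ h a = 1

/-- A strategy is memoryless if its choice only depends on the last state of the history. -/
def IsMemoryless (M : MDP S A) (σ : Strat S A) : Prop :=
  ∀ h h' : List (A × S), lastState M h = lastState M h' → σ h = σ h'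

/-- Probability of traversing exactly the steps of the second list, after having already
traversed the history `pre`, when playing strategy `σ`:
the product `∏ σ(prefix)(aᵢ) · δ(sᵢ, aᵢ)(sᵢ₊₁)`. -/
def probFrom (M : MDP S A) (σ : Strat S A) : List (A × S) → List (A × S) → ℝ≥0
  | _, [] => 1
  | pre, (a, s') :: rest =>
      σ pre a * M.tr (lastState M pre) a s' * probFrom M σ (pre ++ [(a, s')]) rest

/-- Probability of the cylinder of a history under strategy `σ`. -/
def probHist (M : MDP S A) (σ : Strat S A) (h : List (A × S)) : ℝ≥0 :=
  probFrom M σ [] h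

/-- The sequence of states `s₁ s₂ … s_n` of a history. -/
def stateSeq (M : MDP S A) (h : List (A × S)) : List S :=
  M.init :: h.map Prod.snd

/-- The history visits the target set `T` exactly at its last state (first visit). -/
def Hits (M : MDP S A) (T : Finset S) (h : List (A × S)) : Prop :=
  (stateSeq M h).getLast (by simp [stateSeq]) ∈ T ∧
    ∀ s ∈ (stateSeq M h).dropLast, s ∉ T

/-- Accumulated weight (truncated sum) along a history. -/
def tsHist (w : A → ℕ) (h : List (A × S)) : ℕ := (h.map fun p => w p.1).sum

/-- `P^σ ( TS^T ≤ ℓ )`: since all weights are strictly positive, the event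
`TS^T ≤ ℓ` is the disjoint union of the cylinders of the histories that hit `T`
at their last state with accumulated weight at most `ℓ`. -/
noncomputable def probTSLe (M : MDP S A) (σ : Strat S A) (w : A → ℕ) (T : Finset S)
    (ℓ : ℕ) : ℝ≥0∞ :=
  ∑' h : {h : List (A × S) // Hits M T h ∧ tsHist w h ≤ ℓ}, (probHist M σ h.1 : ℝ≥0∞)

/-- `P^σ ( TS^T = ∞ )`: the probability of never reaching `T`. -/
noncomputable def probNoReach (M : MDP S A) (σ : Strat S A) (T : Finset S) : ℝ≥0∞ :=
  1 - ∑' h : {h : List (A × S) // Hits M T h}, (probHist M σ h.1 : ℝ≥0∞)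

/-- `E^σ ( TS^T )`, valued in `[0, ∞]`: the truncated sum is determined at the first
visit of `T`, and takes value `∞` on the (measurable) set of runs never reaching `T`. -/
noncomputable def expTS (M : MDP S A) (σ : Strat S A) (w : A → ℕ) (T : Finset S) : ℝ≥0∞ :=
  (∑' h : {h : List (A × S) // Hits M T h},
      (probHist M σ h.1 : ℝ≥0∞) * (tsHist w h.1 : ℝ≥0∞))
    + probNoReach M σ T * ⊤

/-- A run is encoded as the infinite sequence of its steps `(aᵢ, sᵢ₊₁)`;
`stateAt M ρ n` is the `(n+1)`-st state `s_{n+1}` of the run (`s₁ = init`). -/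
def stateAt (M : MDP S A) (ρ : ℕ → A × S) : ℕ → S
  | 0 => M.init
  | n + 1 => (ρ n).2

/-- The run is consistent with strategy `σ`: every step uses an available action, chosen
with positive probability by `σ`, and leads to a successor of positive transition
probability. -/
def Consistent (M : MDP S A) (σ : Strat S A) (ρ : ℕ → A × S) : Prop :=
  ∀ n : ℕ, (ρ n).1 ∈ M.avail (stateAt M ρ n) ∧
    0 < σ (List.ofFn fun i : Fin n => ρ i) (ρ n).1 ∧
    0 < M.tr (stateAt M ρ n) (ρ n).1 (ρ n).2

open Classical in
/-- Truncated sum `TS^T` of a run: the accumulated weight up to the first visit of `T`,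
and `∞` if `T` is never visited. -/
noncomputable def tsRun (M : MDP S A) (w : A → ℕ) (T : Finset S)
    (ρ : ℕ → A × S) : ℝ≥0∞ :=
  if h : ∃ n, stateAt M ρ n ∈ T then
    ((∑ i ∈ Finset.range (Nat.find h), w (ρ i).1 : ℕ) : ℝ≥0∞)
  else ⊤

end Core

namespace MDPProof
variable {S A : Type} [Fintype S] [Fintype A]

/-- Replace the initial state. -/
def wI (M : MDP S A) (s : S) : MDP S A :=
  { M with init := s }

lemma withInit_self (M : MDP S A) : wI M M.init = M := rfl

@[simp] lemma lastState_nil (M : MDP S A) : lastState M [] = M.init := rfl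

@[simp] lemma lastState_withInit_single (M : MDP S A) (s : S) (p : A × S) :
    lastState (wI M s) [p] = p.2 := rfl

lemma lastState_cons (M : MDP S A) (s : S) (p : A × S) (h : List (A × S)) :
    lastState (wI M s) (p :: h) = lastState (wI M p.2) h := by
  cases h with
  | nil => rfl
  | cons q t =>
    rcases e : (q :: t).getLast? with _ | x
    · simp at e
    · simp [lastState, List.getLast?_cons_cons, e]

@[simp] lemma withInit_tr (M : MDP S A) (s : S) : (wI M s).tr = M.tr := rfl
@[simp] lemma withInit_avail (M : MDP S A) (s : S) : (wI M s).avail = M.avail := rfl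

/-- Shift of a strategy by one step. -/
def shift (σ : Strat S A) (p : A × S) : Strat S A := fun h => σ (p :: h)

lemma isStrategy_shift {M : MDP S A} {s : S} {σ : Strat S A}
    (hσ : IsStrategy (wI M s) σ) (p : A × S) :
    IsStrategy (wI M p.2) (shift σ p) := by
  intro h
  have := hσ (p :: h)
  rwa [lastState_cons] at this


lemma probFrom_shift :
    ∀ (rest : List (A × S)) (M : MDP S A) (σ : Strat S A) (pre : List (A × S)),
      probFrom M σ pre rest
        = probFrom (wI M (lastState M pre)) (fun h => σ (pre ++ h)) [] rest := by
  intro rest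
  induction rest with
  | nil => intro M σ pre; rfl
  | cons p rest ih =>
    intro M σ pre
    obtain ⟨a, s'⟩ := p
    rw [probFrom, probFrom]
    have h1 : lastState M (pre ++ [(a, s')]) = s' := by
      simp [lastState, List.getLast?_append]
    have h2 : lastState (wI M (lastState M pre)) ([] ++ [(a, s')]) = s' := rfl
    rw [ih M σ (pre ++ [(a, s')]),
        ih (wI M (lastState M pre)) (fun h => σ (pre ++ h)) ([] ++ [(a, s')]), h1, h2]
    simp only [List.nil_append, List.append_nil]
    rw [show wI (wI M (lastState M pre)) s' = wI M s' from rfl]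
    simp only [List.append_assoc]
    rfl

lemma probHist_cons (M : MDP S A) (s : S) (σ : Strat S A) (a : A) (s' : S)
    (rest : List (A × S)) :
    probHist (wI M s) σ ((a, s') :: rest)
      = σ [] a * M.tr s a s' * probHist (wI M s') (shift σ (a, s')) rest := by
  rw [probHist, probFrom]
  simp only [List.nil_append]
  rw [probHist, probFrom_shift]
  rfl


lemma stateSeq_wI (M : MDP S A) (s : S) (h : List (A × S)) :
    stateSeq (wI M s) h = s :: h.map Prod.snd := rfl

lemma hits_nil_iff (M : MDP S A) (T : Finset S) (s : S) :
    Hits (wI M s) T [] ↔ s ∈ T := by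
  simp [Hits, stateSeq, wI]

lemma hits_cons_iff (M : MDP S A) (T : Finset S) {s : S} (hs : s ∉ T)
    (a : A) (s' : S) (rest : List (A × S)) :
    Hits (wI M s) T ((a, s') :: rest) ↔ Hits (wI M s') T rest := by
  have e1 : stateSeq (wI M s) ((a, s') :: rest) = s :: stateSeq (wI M s') rest := rfl
  have hne : stateSeq (wI M s') rest ≠ [] := by simp [stateSeq]
  unfold Hits
  show ((s :: stateSeq (wI M s') rest).getLast (by simp) ∈ T ∧
      ∀ x ∈ (s :: stateSeq (wI M s') rest).dropLast, x ∉ T) ↔ _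
  rw [List.getLast_cons hne, List.dropLast_cons_of_ne_nil hne]
  simp [hs]

lemma hits_mem_eq_nil (M : MDP S A) (T : Finset S) {s : S} (hs : s ∈ T)
    {h : List (A × S)} (hh : Hits (wI M s) T h) : h = [] := by
  cases h with
  | nil => rfl
  | cons p t =>
    exfalso
    obtain ⟨a, s'⟩ := p
    have e1 : stateSeq (wI M s) ((a, s') :: t) = s :: stateSeq (wI M s') t := rfl
    have hne : stateSeq (wI M s') t ≠ [] := by simp [stateSeq]
    obtain ⟨-, h2⟩ := hh
    have h2' : ∀ x ∈ (s :: stateSeq (wI M s') t).dropLast, x ∉ T := h2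
    rw [List.dropLast_cons_of_ne_nil hne] at h2'
    exact h2' s List.mem_cons_self hs

lemma not_hits_nil (M : MDP S A) (T : Finset S) {s : S} (hs : s ∉ T) :
    ¬ Hits (wI M s) T [] := fun hh => hs ((hits_nil_iff M T s).1 hh)


/-- Decomposition of hitting histories from `s ∉ T` into first step and tail. -/
def consEquiv (M : MDP S A) (T : Finset S) {s : S} (hs : s ∉ T) (Q : ℕ → Prop) :
    {h : List (A × S) // Hits (wI M s) T h ∧ Q h.length} ≃
      (Σ p : A × S, {rest : List (A × S) // Hits (wI M p.2) T rest ∧ Q (rest.length + 1)}) where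
  toFun x :=
    match x with
    | ⟨[], hx⟩ => absurd hx.1 (not_hits_nil M T hs)
    | ⟨(a, s') :: rest, hx⟩ =>
        ⟨(a, s'), rest, (hits_cons_iff M T hs a s' rest).1 hx.1, hx.2⟩
  invFun y :=
    ⟨(y.1.1, y.1.2) :: y.2.1, (hits_cons_iff M T hs _ _ _).2 y.2.2.1, y.2.2.2⟩
  left_inv := by
    rintro ⟨(_ | ⟨⟨a, s'⟩, rest⟩), hx⟩
    · exact absurd hx.1 (not_hits_nil M T hs)
    · rfl
  right_inv := by rintro ⟨⟨a, s'⟩, rest, hr⟩; rfl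

lemma tsum_hits_cons (M : MDP S A) (T : Finset S) {s : S} (hs : s ∉ T) (Q : ℕ → Prop)
    (f : List (A × S) → ℝ≥0∞) :
    ∑' h : {h : List (A × S) // Hits (wI M s) T h ∧ Q h.length}, f h.1
      = ∑ a : A, ∑ s' : S,
          ∑' rest : {rest : List (A × S) // Hits (wI M s') T rest ∧ Q (rest.length + 1)},
            f ((a, s') :: rest.1) := by
  have h1 : ∑' h : {h : List (A × S) // Hits (wI M s) T h ∧ Q h.length}, f h.1
      = ∑' y : (Σ p : A × S,
          {rest : List (A × S) // Hits (wI M p.2) T rest ∧ Q (rest.length + 1)}),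
          f ((y.1.1, y.1.2) :: y.2.1) := by
    rw [← Equiv.tsum_eq (consEquiv M T hs Q)
      (fun y => f ((y.1.1, y.1.2) :: y.2.1))]
    apply tsum_congr
    rintro ⟨(_ | ⟨⟨a, s'⟩, rest⟩), hx⟩
    · exact absurd hx.1 (not_hits_nil M T hs)
    · rfl
  rw [h1, ENNReal.tsum_sigma']
  rw [tsum_fintype]
  rw [Fintype.sum_prod_type]


lemma tsum_hits_of_mem (M : MDP S A) (T : Finset S) {s : S} (hs : s ∈ T) (Q : ℕ → Prop)
    (hQ : Q 0) (f : List (A × S) → ℝ≥0∞) :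
    ∑' h : {h : List (A × S) // Hits (wI M s) T h ∧ Q h.length}, f h.1 = f [] := by
  have hu : ∀ x : {h : List (A × S) // Hits (wI M s) T h ∧ Q h.length},
      x = ⟨[], ⟨(hits_nil_iff M T s).2 hs, hQ⟩⟩ :=
    fun x => Subtype.ext (hits_mem_eq_nil M T hs x.2.1)
  exact tsum_eq_single _ (fun b hb => absurd (hu b) hb)

lemma tsum_eq_iSup_length (P : List (A × S) → Prop) (f : List (A × S) → ℝ≥0∞) :
    ∑' h : {h : List (A × S) // P h}, f h.1
      = ⨆ n : ℕ, ∑' h : {h : List (A × S) // P h ∧ h.length ≤ n}, f h.1 := by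
  classical
  apply le_antisymm
  · rw [ENNReal.tsum_eq_iSup_sum]
    apply iSup_le
    intro F
    set n := F.sup (fun x => x.1.length) with hn
    refine le_trans ?_ (le_iSup (fun n => ∑' h : {h : List (A × S) // P h ∧ h.length ≤ n},
      f h.1) n)
    have hg : ∀ x : {x : {h : List (A × S) // P h} // x ∈ F},
        P x.1.1 ∧ x.1.1.length ≤ n :=
      fun x => ⟨x.1.2, Finset.le_sup (f := fun x => x.1.length) x.2⟩
    let g : {x : {h : List (A × S) // P h} // x ∈ F} →
        {h : List (A × S) // P h ∧ h.length ≤ n} := fun x => ⟨x.1.1, hg x⟩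
    have hginj : Function.Injective g := by
      rintro ⟨⟨h₁, p₁⟩, m₁⟩ ⟨⟨h₂, p₂⟩, m₂⟩ he
      simp only [g, Subtype.mk.injEq] at he ⊢
      exact he
    calc ∑ x ∈ F, f x.1 = ∑ x ∈ F.attach, f x.1.1 := (Finset.sum_attach F _).symm
      _ = ∑ y ∈ F.attach.image g, f y.1 := by
          rw [Finset.sum_image (fun x _ y _ h => hginj h)]
      _ ≤ ∑' y : {h : List (A × S) // P h ∧ h.length ≤ n}, f y.1 :=
          ENNReal.sum_le_tsum _
  · apply iSup_le
    intro n
    apply Summable.tsum_le_tsum_of_inj (fun x : {h : List (A × S) // P h ∧ h.length ≤ n} =>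
      (⟨x.1, x.2.1⟩ : {h : List (A × S) // P h}))
    · rintro ⟨h₁, p₁⟩ ⟨h₂, p₂⟩ he
      simpa using Subtype.ext (congrArg Subtype.val he)
    · intro c _; exact zero_le
    · intro b; exact le_rfl
    · exact ENNReal.summable
    · exact ENNReal.summable


lemma tsum_subtype_congr {P Q : List (A × S) → Prop} (h : ∀ x, P x ↔ Q x)
    (f : List (A × S) → ℝ≥0∞) :
    ∑' x : {h : List (A × S) // P h}, f x.1 = ∑' x : {h : List (A × S) // Q h}, f x.1 :=
  Equiv.tsum_eq (Equiv.subtypeEquivRight h) (fun x : {h : List (A × S) // Q h} => f x.1)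

@[simp] lemma probHist_nil (M : MDP S A) (σ : Strat S A) : probHist M σ [] = 1 := rfl

@[simp] lemma tsHist_nil (w : A → ℕ) : tsHist (S := S) w [] = 0 := rfl

lemma tsHist_cons (w : A → ℕ) (a : A) (s' : S) (rest : List (A × S)) :
    tsHist w ((a, s') :: rest) = w a + tsHist w rest := rfl

/-- One-step decomposition of the hitting-probability-type sums. -/
lemma HQ_cons (M : MDP S A) (T : Finset S) {s : S} (hs : s ∉ T) (Q : ℕ → Prop)
    (σ : Strat S A) :
    ∑' h : {h : List (A × S) // Hits (wI M s) T h ∧ Q h.length},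
        (probHist (wI M s) σ h.1 : ℝ≥0∞)
      = ∑ a : A, ∑ s' : S, (σ [] a : ℝ≥0∞) * (M.tr s a s' : ℝ≥0∞) *
          ∑' rest : {h : List (A × S) // Hits (wI M s') T h ∧ Q (h.length + 1)},
            (probHist (wI M s') (shift σ (a, s')) rest.1 : ℝ≥0∞) := by
  rw [tsum_hits_cons M T hs Q (fun h => (probHist (wI M s) σ h : ℝ≥0∞))]
  congr 1; funext a; congr 1; funext s'
  rw [← ENNReal.tsum_mul_left]
  apply tsum_congr
  intro rest
  rw [probHist_cons]
  push_cast
  ring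

/-- One-step decomposition of the expected-cost-type sums. -/
lemma EQ_cons (M : MDP S A) (w : A → ℕ) (T : Finset S) {s : S} (hs : s ∉ T) (Q : ℕ → Prop)
    (σ : Strat S A) :
    ∑' h : {h : List (A × S) // Hits (wI M s) T h ∧ Q h.length},
        (probHist (wI M s) σ h.1 : ℝ≥0∞) * (tsHist w h.1 : ℝ≥0∞)
      = ∑ a : A, ∑ s' : S, (σ [] a : ℝ≥0∞) * (M.tr s a s' : ℝ≥0∞) *
          ((w a : ℝ≥0∞) *
            (∑' rest : {h : List (A × S) // Hits (wI M s') T h ∧ Q (h.length + 1)},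
              (probHist (wI M s') (shift σ (a, s')) rest.1 : ℝ≥0∞))
           + ∑' rest : {h : List (A × S) // Hits (wI M s') T h ∧ Q (h.length + 1)},
              (probHist (wI M s') (shift σ (a, s')) rest.1 : ℝ≥0∞)
                * (tsHist w rest.1 : ℝ≥0∞)) := by
  rw [tsum_hits_cons M T hs Q (fun h => (probHist (wI M s) σ h : ℝ≥0∞) * (tsHist w h : ℝ≥0∞))]
  congr 1; funext a; congr 1; funext s'
  rw [mul_add, ← mul_assoc, ← ENNReal.tsum_mul_left, ← ENNReal.tsum_mul_left,
    ← ENNReal.tsum_add]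
  apply tsum_congr
  intro rest
  rw [probHist_cons, tsHist_cons]
  push_cast
  ring


set_option linter.unusedSectionVars false

variable (M : MDP S A) (w : A → ℕ) (T : Finset S)

/-- Probability of hitting `T` from `s` within `n` steps. -/
noncomputable def HHn (σ : Strat S A) (s : S) (n : ℕ) : ℝ≥0∞ :=
  ∑' h : {h : List (A × S) // Hits (wI M s) T h ∧ h.length ≤ n},
    (probHist (wI M s) σ h.1 : ℝ≥0∞)

/-- Probability of hitting `T` from `s`. -/
noncomputable def HH (σ : Strat S A) (s : S) : ℝ≥0∞ :=
  ∑' h : {h : List (A × S) // Hits (wI M s) T h}, (probHist (wI M s) σ h.1 : ℝ≥0∞)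

/-- Partial expected truncated sum (hitting within `n` steps). -/
noncomputable def EEn (σ : Strat S A) (s : S) (n : ℕ) : ℝ≥0∞ :=
  ∑' h : {h : List (A × S) // Hits (wI M s) T h ∧ h.length ≤ n},
    (probHist (wI M s) σ h.1 : ℝ≥0∞) * (tsHist w h.1 : ℝ≥0∞)

/-- Expected truncated sum restricted to hitting histories. -/
noncomputable def EE (σ : Strat S A) (s : S) : ℝ≥0∞ :=
  ∑' h : {h : List (A × S) // Hits (wI M s) T h},
    (probHist (wI M s) σ h.1 : ℝ≥0∞) * (tsHist w h.1 : ℝ≥0∞)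

/-- The expected truncated sum from `s`. -/
noncomputable def Ex (σ : Strat S A) (s : S) : ℝ≥0∞ :=
  EE M w T σ s + (1 - HH M T σ s) * ⊤

lemma expTS_eq_Ex (σ : Strat S A) (s : S) : expTS (wI M s) σ w T = Ex M w T σ s := rfl

lemma HH_eq_iSup (σ : Strat S A) (s : S) : HH M T σ s = ⨆ n, HHn M T σ s n := by
  simp only [HH, HHn]
  exact tsum_eq_iSup_length (fun h => Hits (wI M s) T h)
    (fun h => (probHist (wI M s) σ h : ℝ≥0∞))

lemma EE_eq_iSup (σ : Strat S A) (s : S) : EE M w T σ s = ⨆ n, EEn M w T σ s n := by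
  simp only [EE, EEn]
  exact tsum_eq_iSup_length (fun h => Hits (wI M s) T h)
    (fun h => (probHist (wI M s) σ h : ℝ≥0∞) * (tsHist w h : ℝ≥0∞))

lemma HHn_mem {s : S} (hs : s ∈ T) (σ : Strat S A) (n : ℕ) : HHn M T σ s n = 1 := by
  rw [HHn, tsum_hits_of_mem M T hs (fun m => m ≤ n) (Nat.zero_le n)
    (fun h => (probHist (wI M s) σ h : ℝ≥0∞))]
  simp

lemma HH_mem {s : S} (hs : s ∈ T) (σ : Strat S A) : HH M T σ s = 1 := by
  rw [HH_eq_iSup]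
  simp [HHn_mem M T hs σ]

lemma EEn_mem {s : S} (hs : s ∈ T) (σ : Strat S A) (n : ℕ) : EEn M w T σ s n = 0 := by
  rw [EEn, tsum_hits_of_mem M T hs (fun m => m ≤ n) (Nat.zero_le n)
    (fun h => (probHist (wI M s) σ h : ℝ≥0∞) * (tsHist w h : ℝ≥0∞))]
  simp

lemma EE_mem {s : S} (hs : s ∈ T) (σ : Strat S A) : EE M w T σ s = 0 := by
  rw [EE_eq_iSup]
  simp [EEn_mem M w T hs σ]

lemma Ex_mem {s : S} (hs : s ∈ T) (σ : Strat S A) : Ex M w T σ s = 0 := by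
  rw [Ex, EE_mem M w T hs, HH_mem M T hs]
  simp

lemma HHn_zero {s : S} (hs : s ∉ T) (σ : Strat S A) : HHn M T σ s 0 = 0 := by
  rw [HHn, ENNReal.tsum_eq_zero]
  rintro ⟨h, hh, hl⟩
  exfalso
  rw [List.length_eq_zero_iff.1 (Nat.le_zero.1 hl)] at hh
  exact not_hits_nil M T hs hh

lemma HHn_succ {s : S} (hs : s ∉ T) (σ : Strat S A) (n : ℕ) :
    HHn M T σ s (n + 1) = ∑ a : A, ∑ s' : S, (σ [] a : ℝ≥0∞) * (M.tr s a s' : ℝ≥0∞) *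
      HHn M T (shift σ (a, s')) s' n := by
  rw [HHn, HQ_cons M T hs (fun m => m ≤ n + 1) σ]
  congr 1; funext a; congr 1; funext s'
  congr 1
  rw [HHn]
  exact tsum_subtype_congr (P := fun x => Hits (wI M s') T x ∧ x.length + 1 ≤ n + 1)
    (Q := fun x => Hits (wI M s') T x ∧ x.length ≤ n)
    (fun x => and_congr_right fun _ => Nat.succ_le_succ_iff)
    (fun h => (probHist (wI M s') (shift σ (a, s')) h : ℝ≥0∞))

lemma HH_rec {s : S} (hs : s ∉ T) (σ : Strat S A) :
    HH M T σ s = ∑ a : A, ∑ s' : S, (σ [] a : ℝ≥0∞) * (M.tr s a s' : ℝ≥0∞) *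
      HH M T (shift σ (a, s')) s' := by
  have e1 : HH M T σ s = ∑' h : {h : List (A × S) //
      Hits (wI M s) T h ∧ (fun _ : ℕ => True) h.length}, (probHist (wI M s) σ h.1 : ℝ≥0∞) :=
    tsum_subtype_congr (P := fun x => Hits (wI M s) T x)
      (Q := fun x => Hits (wI M s) T x ∧ True) (fun x => (and_iff_left trivial).symm)
      (fun h => (probHist (wI M s) σ h : ℝ≥0∞))
  rw [e1, HQ_cons M T hs (fun _ : ℕ => True) σ]
  congr 1; funext a; congr 1; funext s'
  congr 1
  rw [HH]
  exact tsum_subtype_congr (P := fun x => Hits (wI M s') T x ∧ True)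
    (Q := fun x => Hits (wI M s') T x) (fun x => and_iff_left trivial) (fun h => (probHist (wI M s') (shift σ (a, s')) h : ℝ≥0∞))

lemma EEn_succ {s : S} (hs : s ∉ T) (σ : Strat S A) (n : ℕ) :
    EEn M w T σ s (n + 1) = ∑ a : A, ∑ s' : S,
      (σ [] a : ℝ≥0∞) * (M.tr s a s' : ℝ≥0∞) *
        ((w a : ℝ≥0∞) * HHn M T (shift σ (a, s')) s' n + EEn M w T (shift σ (a, s')) s' n) := by
  rw [EEn, EQ_cons M w T hs (fun m => m ≤ n + 1) σ]
  congr 1; funext a; congr 1; funext s'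
  congr 2
  · congr 1
    rw [HHn]
    exact tsum_subtype_congr (P := fun x => Hits (wI M s') T x ∧ x.length + 1 ≤ n + 1)
      (Q := fun x => Hits (wI M s') T x ∧ x.length ≤ n)
      (fun x => and_congr_right fun _ => Nat.succ_le_succ_iff) (fun h => (probHist (wI M s') (shift σ (a, s')) h : ℝ≥0∞))
  · rw [EEn]
    exact tsum_subtype_congr (P := fun x => Hits (wI M s') T x ∧ x.length + 1 ≤ n + 1)
      (Q := fun x => Hits (wI M s') T x ∧ x.length ≤ n)
      (fun x => and_congr_right fun _ => Nat.succ_le_succ_iff) (fun h => (probHist (wI M s') (shift σ (a, s')) h : ℝ≥0∞) * (tsHist w h : ℝ≥0∞))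

lemma EE_rec {s : S} (hs : s ∉ T) (σ : Strat S A) :
    EE M w T σ s = ∑ a : A, ∑ s' : S,
      (σ [] a : ℝ≥0∞) * (M.tr s a s' : ℝ≥0∞) *
        ((w a : ℝ≥0∞) * HH M T (shift σ (a, s')) s' + EE M w T (shift σ (a, s')) s') := by
  have e1 : EE M w T σ s = ∑' h : {h : List (A × S) //
      Hits (wI M s) T h ∧ (fun _ : ℕ => True) h.length},
      (probHist (wI M s) σ h.1 : ℝ≥0∞) * (tsHist w h.1 : ℝ≥0∞) :=
    tsum_subtype_congr (P := fun x => Hits (wI M s) T x)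
      (Q := fun x => Hits (wI M s) T x ∧ True) (fun x => (and_iff_left trivial).symm)
      (fun h => (probHist (wI M s) σ h : ℝ≥0∞) * (tsHist w h : ℝ≥0∞))
  rw [e1, EQ_cons M w T hs (fun _ : ℕ => True) σ]
  congr 1; funext a; congr 1; funext s'
  congr 2
  · congr 1
    rw [HH]
    exact tsum_subtype_congr (P := fun x => Hits (wI M s') T x ∧ True)
      (Q := fun x => Hits (wI M s') T x) (fun x => and_iff_left trivial) (fun h => (probHist (wI M s') (shift σ (a, s')) h : ℝ≥0∞))
  · rw [EE]
    exact tsum_subtype_congr (P := fun x => Hits (wI M s') T x ∧ True)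
      (Q := fun x => Hits (wI M s') T x) (fun x => and_iff_left trivial) (fun h => (probHist (wI M s') (shift σ (a, s')) h : ℝ≥0∞) * (tsHist w h : ℝ≥0∞))


lemma sum_sigma_one {s : S} {σ : Strat S A} (hσ : IsStrategy (wI M s) σ) :
    ∑ a : A, (σ [] a : ℝ≥0∞) = 1 := by
  rw [← ENNReal.coe_finset_sum, (hσ []).2]
  rfl

lemma sigma_not_avail {s : S} {σ : Strat S A} (hσ : IsStrategy (wI M s) σ) {a : A}
    (ha : a ∉ M.avail s) : σ [] a = 0 :=
  (hσ []).1 a ha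

lemma sum_c_eq_one {s : S} {σ : Strat S A} (hσ : IsStrategy (wI M s) σ) :
    ∑ a : A, ∑ s' : S, (σ [] a : ℝ≥0∞) * (M.tr s a s' : ℝ≥0∞) = 1 := by
  have e1 : ∀ a : A, ∑ s' : S, (σ [] a : ℝ≥0∞) * (M.tr s a s' : ℝ≥0∞)
      = (σ [] a : ℝ≥0∞) := by
    intro a
    by_cases ha : a ∈ M.avail s
    · rw [← Finset.mul_sum, ← ENNReal.coe_finset_sum, M.tr_sum s a ha, ENNReal.coe_one,
        mul_one]
    · simp [sigma_not_avail M hσ ha]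
  rw [Finset.sum_congr rfl (fun a _ => e1 a), sum_sigma_one M hσ]

lemma HHn_le_one : ∀ (n : ℕ) (s : S) (σ : Strat S A), IsStrategy (wI M s) σ →
    HHn M T σ s n ≤ 1 := by
  intro n
  induction n with
  | zero =>
    intro s σ hσ
    by_cases hs : s ∈ T
    · rw [HHn_mem M T hs]
    · rw [HHn_zero M T hs]
      exact zero_le_one
  | succ n ih =>
    intro s σ hσ
    by_cases hs : s ∈ T
    · rw [HHn_mem M T hs]
    · rw [HHn_succ M T hs]
      calc ∑ a : A, ∑ s' : S, (σ [] a : ℝ≥0∞) * (M.tr s a s' : ℝ≥0∞) *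
            HHn M T (shift σ (a, s')) s' n
          ≤ ∑ a : A, ∑ s' : S, (σ [] a : ℝ≥0∞) * (M.tr s a s' : ℝ≥0∞) := by
            refine Finset.sum_le_sum fun a _ => Finset.sum_le_sum fun s' _ => ?_
            calc (σ [] a : ℝ≥0∞) * (M.tr s a s' : ℝ≥0∞) * HHn M T (shift σ (a, s')) s' n
                ≤ (σ [] a : ℝ≥0∞) * (M.tr s a s' : ℝ≥0∞) * 1 :=
                  mul_le_mul_right (ih s' (shift σ (a, s')) (isStrategy_shift hσ (a, s'))) _
              _ = _ := mul_one _
        _ = 1 := sum_c_eq_one M hσ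

lemma HH_le_one {s : S} {σ : Strat S A} (hσ : IsStrategy (wI M s) σ) : HH M T σ s ≤ 1 := by
  rw [HH_eq_iSup]
  exact iSup_le fun n => HHn_le_one M T n s σ hσ

lemma HHn_le_HH (σ : Strat S A) (s : S) (n : ℕ) : HHn M T σ s n ≤ HH M T σ s := by
  rw [HH_eq_iSup]
  exact le_iSup (fun n => HHn M T σ s n) n

lemma one_sub_sum_c_mul (s : S) (σ : Strat S A) (hσ : IsStrategy (wI M s) σ)
    (x : A → S → ℝ≥0∞) (hx : ∀ a s', x a s' ≤ 1) :
    1 - ∑ a : A, ∑ s' : S, (σ [] a : ℝ≥0∞) * (M.tr s a s' : ℝ≥0∞) * x a s'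
      = ∑ a : A, ∑ s' : S, (σ [] a : ℝ≥0∞) * (M.tr s a s' : ℝ≥0∞) * (1 - x a s') := by
  have key : (∑ a : A, ∑ s' : S, (σ [] a : ℝ≥0∞) * (M.tr s a s' : ℝ≥0∞) * (1 - x a s'))
      + ∑ a : A, ∑ s' : S, (σ [] a : ℝ≥0∞) * (M.tr s a s' : ℝ≥0∞) * x a s' = 1 := by
    rw [← Finset.sum_add_distrib]
    have e1 : ∀ a : A, (∑ s' : S, (σ [] a : ℝ≥0∞) * (M.tr s a s' : ℝ≥0∞) * (1 - x a s'))
        + ∑ s' : S, (σ [] a : ℝ≥0∞) * (M.tr s a s' : ℝ≥0∞) * x a s'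
        = ∑ s' : S, (σ [] a : ℝ≥0∞) * (M.tr s a s' : ℝ≥0∞) := by
      intro a
      rw [← Finset.sum_add_distrib]
      refine Finset.sum_congr rfl fun s' _ => ?_
      rw [← mul_add, tsub_add_cancel_of_le (hx a s'), mul_one]
    rw [Finset.sum_congr rfl (fun a _ => e1 a), sum_c_eq_one M hσ]
  have hne : (∑ a : A, ∑ s' : S, (σ [] a : ℝ≥0∞) * (M.tr s a s' : ℝ≥0∞) * x a s') ≠ ⊤ := by
    refine ne_top_of_le_ne_top (by simp : (1 : ℝ≥0∞) ≠ ⊤) ?_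
    calc ∑ a : A, ∑ s' : S, (σ [] a : ℝ≥0∞) * (M.tr s a s' : ℝ≥0∞) * x a s'
        ≤ ∑ a : A, ∑ s' : S, (σ [] a : ℝ≥0∞) * (M.tr s a s' : ℝ≥0∞) := by
          refine Finset.sum_le_sum fun a _ => Finset.sum_le_sum fun s' _ => ?_
          calc _ ≤ (σ [] a : ℝ≥0∞) * (M.tr s a s' : ℝ≥0∞) * 1 :=
                mul_le_mul_right (hx a s') _
            _ = _ := mul_one _
      _ = 1 := sum_c_eq_one M hσ
  exact (ENNReal.eq_sub_of_add_eq hne key).symm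

lemma key_term (c H' E' wa : ℝ≥0∞) (hH : H' ≤ 1) :
    c * (wa * H' + E') + c * (1 - H') * ⊤ = c * (wa + (E' + (1 - H') * ⊤)) := by
  rcases eq_or_ne c 0 with rfl | hc0
  · simp
  rcases eq_or_lt_of_le hH with h1 | hlt
  · rw [h1]
    simp
  · have h2 : (1 : ℝ≥0∞) - H' ≠ 0 := by
      rw [ne_eq, tsub_eq_zero_iff_le]
      exact not_le.2 hlt
    rw [ENNReal.mul_top (mul_ne_zero hc0 h2), ENNReal.mul_top h2]
    simp [ENNReal.mul_top hc0]

lemma Ex_rec {s : S} (hs : s ∉ T) {σ : Strat S A} (hσ : IsStrategy (wI M s) σ) :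
    Ex M w T σ s = ∑ a : A, ∑ s' : S, (σ [] a : ℝ≥0∞) * (M.tr s a s' : ℝ≥0∞) *
      ((w a : ℝ≥0∞) + Ex M w T (shift σ (a, s')) s') := by
  rw [Ex, EE_rec M w T hs, HH_rec M T hs]
  rw [one_sub_sum_c_mul M s σ hσ (fun a s' => HH M T (shift σ (a, s')) s')
    (fun a s' => HH_le_one M T (isStrategy_shift hσ (a, s')))]
  rw [Finset.sum_mul, ← Finset.sum_add_distrib]
  refine Finset.sum_congr rfl fun a _ => ?_
  rw [Finset.sum_mul, ← Finset.sum_add_distrib]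
  refine Finset.sum_congr rfl fun s' _ => ?_
  exact key_term _ _ _ _ (HH_le_one M T (isStrategy_shift hσ (a, s')))


open Classical in
/-- The one-step optimality (Bellman) operator. -/
noncomputable def Phi : (S → ℝ≥0∞) →o (S → ℝ≥0∞) where
  toFun f s := if s ∈ T then 0 else (M.avail s).inf' (M.avail_nonempty s)
    (fun a => (w a : ℝ≥0∞) + ∑ s' : S, (M.tr s a s' : ℝ≥0∞) * f s')
  monotone' := by
    intro f g hfg s
    by_cases hs : s ∈ T
    · simp [hs]
    · simp only [if_neg hs]
      apply Finset.le_inf'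
      intro a ha
      refine le_trans (Finset.inf'_le _ ha) ?_
      exact add_le_add le_rfl (Finset.sum_le_sum fun s' _ => mul_le_mul_right (hfg s') _)

/-- The optimal value function: least fixed point of the Bellman operator. -/
noncomputable def Vv : S → ℝ≥0∞ := OrderHom.lfp (Phi M w T)

lemma Vv_fixed : Phi M w T (Vv M w T) = Vv M w T := OrderHom.map_lfp _

lemma Vv_mem {s : S} (hs : s ∈ T) : Vv M w T s = 0 := by
  classical
  conv_lhs => rw [← Vv_fixed M w T]
  exact if_pos hs

lemma Vv_rec {s : S} (hs : s ∉ T) :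
    Vv M w T s = (M.avail s).inf' (M.avail_nonempty s)
      (fun a => (w a : ℝ≥0∞) + ∑ s' : S, (M.tr s a s' : ℝ≥0∞) * Vv M w T s') := by
  classical
  conv_lhs => rw [← Vv_fixed M w T]
  exact if_neg hs

lemma Vv_le_Ex (s : S) (σ : Strat S A) (hσ : IsStrategy (wI M s) σ) :
    Vv M w T s ≤ Ex M w T σ s := by
  classical
  set g : S → ℝ≥0∞ := fun s => ⨅ σ : Strat S A, ⨅ _ : IsStrategy (wI M s) σ, Ex M w T σ s
    with hg
  have hPhi : Phi M w T g ≤ g := by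
    intro s
    by_cases hs : s ∈ T
    · exact (if_pos hs : Phi M w T g s = 0).trans_le zero_le
    refine le_iInf fun σ => le_iInf fun hσ => ?_
    rw [Ex_rec M w T hs hσ]
    show (if s ∈ T then 0 else (M.avail s).inf' (M.avail_nonempty s)
      (fun a => (w a : ℝ≥0∞) + ∑ s' : S, (M.tr s a s' : ℝ≥0∞) * g s')) ≤ _
    rw [if_neg hs]
    set I := (M.avail s).inf' (M.avail_nonempty s)
      (fun a => (w a : ℝ≥0∞) + ∑ s' : S, (M.tr s a s' : ℝ≥0∞) * g s') with hI
    calc I = (∑ a : A, (σ [] a : ℝ≥0∞)) * I := by rw [sum_sigma_one M hσ, one_mul]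
      _ = ∑ a : A, (σ [] a : ℝ≥0∞) * I := Finset.sum_mul _ _ _
      _ ≤ ∑ a : A, ∑ s' : S, (σ [] a : ℝ≥0∞) * (M.tr s a s' : ℝ≥0∞) *
            ((w a : ℝ≥0∞) + Ex M w T (shift σ (a, s')) s') := by
        refine Finset.sum_le_sum fun a _ => ?_
        by_cases ha : a ∈ M.avail s
        · have h1 : I ≤ (w a : ℝ≥0∞) + ∑ s' : S, (M.tr s a s' : ℝ≥0∞) * g s' :=
            Finset.inf'_le _ ha
          have h3 : (w a : ℝ≥0∞) + ∑ s' : S, (M.tr s a s' : ℝ≥0∞) * g s'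
              = ∑ s' : S, (M.tr s a s' : ℝ≥0∞) * ((w a : ℝ≥0∞) + g s') := by
            have : ∑ s' : S, (M.tr s a s' : ℝ≥0∞) * ((w a : ℝ≥0∞) + g s')
                = (∑ s' : S, (M.tr s a s' : ℝ≥0∞)) * (w a : ℝ≥0∞)
                  + ∑ s' : S, (M.tr s a s' : ℝ≥0∞) * g s' := by
              rw [Finset.sum_mul, ← Finset.sum_add_distrib]
              exact Finset.sum_congr rfl fun s' _ => by rw [mul_add]
            rw [this, ← ENNReal.coe_finset_sum, M.tr_sum s a ha, ENNReal.coe_one, one_mul]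
          calc (σ [] a : ℝ≥0∞) * I
              ≤ (σ [] a : ℝ≥0∞) * ∑ s' : S, (M.tr s a s' : ℝ≥0∞) * ((w a : ℝ≥0∞) + g s') :=
                mul_le_mul_right (h1.trans h3.le) _
            _ = ∑ s' : S, (σ [] a : ℝ≥0∞) * (M.tr s a s' : ℝ≥0∞) * ((w a : ℝ≥0∞) + g s') := by
                rw [Finset.mul_sum]
                exact Finset.sum_congr rfl fun s' _ => by rw [mul_assoc]
            _ ≤ _ := by
                refine Finset.sum_le_sum fun s' _ => mul_le_mul_right (add_le_add le_rfl ?_) _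
                exact iInf₂_le (shift σ (a, s')) (isStrategy_shift hσ (a, s'))
        · simp [sigma_not_avail M hσ ha]
  have hle : Vv M w T ≤ g := OrderHom.lfp_le _ hPhi
  exact (hle s).trans (iInf₂_le σ hσ)


open Classical in
/-- Greedy optimal action at `s`. -/
noncomputable def astar (s : S) : A :=
  if hs : s ∉ T then
    ((M.avail s).exists_mem_eq_inf' (M.avail_nonempty s)
      (fun a => (w a : ℝ≥0∞) + ∑ s' : S, (M.tr s a s' : ℝ≥0∞) * Vv M w T s')).choose
  else (M.avail_nonempty s).choose

lemma astar_avail (s : S) : astar M w T s ∈ M.avail s := by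
  classical
  rw [astar]
  split
  · next hs =>
    exact ((M.avail s).exists_mem_eq_inf' (M.avail_nonempty s) _).choose_spec.1
  · exact (M.avail_nonempty s).choose_spec

lemma astar_spec {s : S} (hs : s ∉ T) :
    Vv M w T s = (w (astar M w T s) : ℝ≥0∞)
      + ∑ s' : S, (M.tr s (astar M w T s) s' : ℝ≥0∞) * Vv M w T s' := by
  classical
  rw [Vv_rec M w T hs]
  have h := ((M.avail s).exists_mem_eq_inf' (M.avail_nonempty s)
    (fun a => (w a : ℝ≥0∞) + ∑ s' : S, (M.tr s a s' : ℝ≥0∞) * Vv M w T s')).choose_spec.2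
  rw [astar, dif_pos hs]
  exact h

open Classical in
/-- The greedy pure memoryless strategy, as a strategy from `s`. -/
noncomputable def sstarAt (s : S) : Strat S A :=
  fun h a => if a = astar M w T (lastState (wI M s) h) then 1 else 0

lemma isStrategy_sstarAt (s : S) : IsStrategy (wI M s) (sstarAt M w T s) := by
  intro h
  constructor
  · intro a ha
    rw [sstarAt, if_neg]
    intro he
    rw [he] at ha
    exact ha (astar_avail M w T _)
  · classical
    rw [Finset.sum_eq_single (astar M w T (lastState (wI M s) h))]
    · simp [sstarAt]
    · intro b _ hb; simp [sstarAt, hb]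
    · simp

lemma shift_sstarAt (s : S) (p : A × S) :
    shift (sstarAt M w T s) p = sstarAt M w T p.2 := by
  funext h a
  simp only [shift, sstarAt]
  rw [lastState_cons]

open Classical in
lemma sstarAt_nil (s : S) (a : A) :
    ((sstarAt M w T s [] a : ℝ≥0) : ℝ≥0∞) = if a = astar M w T s then 1 else 0 := by
  classical
  rw [sstarAt]
  rw [show lastState (wI M s) ([] : List (A × S)) = s from rfl]
  split <;> simp

lemma sum_sstar (s : S) (X : A → S → ℝ≥0∞) :
    ∑ a : A, ∑ s' : S, ((sstarAt M w T s) [] a : ℝ≥0∞) * X a s'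
      = ∑ s' : S, X (astar M w T s) s' := by
  classical
  have e1 : ∀ a : A, ∑ s' : S, ((sstarAt M w T s) [] a : ℝ≥0∞) * X a s'
      = if a = astar M w T s then ∑ s' : S, X a s' else 0 := by
    intro a
    rw [Finset.sum_congr rfl (fun s' _ => by rw [sstarAt_nil])]
    split <;> simp
  rw [Finset.sum_congr rfl (fun a _ => e1 a), Finset.sum_ite_eq']
  simp

open Classical in
/-- Expected cost of the greedy strategy, truncated at horizon `n`. -/
noncomputable def Cn : ℕ → S → ℝ≥0∞
  | 0, _ => 0
  | n + 1, s => if s ∈ T then 0 else (w (astar M w T s) : ℝ≥0∞)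
      + ∑ s' : S, (M.tr s (astar M w T s) s' : ℝ≥0∞) * Cn n s'

lemma Cn_le_Vv : ∀ (n : ℕ) (s : S), Cn M w T n s ≤ Vv M w T s := by
  intro n
  induction n with
  | zero => intro s; exact zero_le
  | succ n ih =>
    intro s
    rw [Cn]
    by_cases hs : s ∈ T
    · simp [hs]
    rw [if_neg hs, astar_spec M w T hs]
    exact add_le_add le_rfl (Finset.sum_le_sum fun s' _ => mul_le_mul_right (ih s') _)

lemma EEn_zero {s : S} (hs : s ∉ T) (σ : Strat S A) : EEn M w T σ s 0 = 0 := by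
  rw [EEn, ENNReal.tsum_eq_zero]
  rintro ⟨h, hh, hl⟩
  exfalso
  rw [List.length_eq_zero_iff.1 (Nat.le_zero.1 hl)] at hh
  exact not_hits_nil M T hs hh

lemma HHn_sstar_succ {s : S} (hs : s ∉ T) (n : ℕ) :
    HHn M T (sstarAt M w T s) s (n + 1)
      = ∑ s' : S, (M.tr s (astar M w T s) s' : ℝ≥0∞) * HHn M T (sstarAt M w T s') s' n := by
  rw [HHn_succ M T hs]
  simp only [shift_sstarAt]
  rw [← sum_sstar M w T s (fun a s' => (M.tr s a s' : ℝ≥0∞) * HHn M T (sstarAt M w T s') s' n)]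
  exact Finset.sum_congr rfl fun a _ => Finset.sum_congr rfl fun s' _ => by rw [mul_assoc]

lemma EEn_sstar_succ {s : S} (hs : s ∉ T) (n : ℕ) :
    EEn M w T (sstarAt M w T s) s (n + 1)
      = ∑ s' : S, (M.tr s (astar M w T s) s' : ℝ≥0∞) *
          ((w (astar M w T s) : ℝ≥0∞) * HHn M T (sstarAt M w T s') s' n
            + EEn M w T (sstarAt M w T s') s' n) := by
  rw [EEn_succ M w T hs]
  simp only [shift_sstarAt]
  rw [← sum_sstar M w T s (fun a s' => (M.tr s a s' : ℝ≥0∞) *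
    ((w a : ℝ≥0∞) * HHn M T (sstarAt M w T s') s' n + EEn M w T (sstarAt M w T s') s' n))]
  exact Finset.sum_congr rfl fun a _ => Finset.sum_congr rfl fun s' _ => by rw [mul_assoc]


lemma one_sub_sum_tr {s : S} {a : A} (ha : a ∈ M.avail s) (x : S → ℝ≥0∞)
    (hx : ∀ s', x s' ≤ 1) :
    1 - ∑ s' : S, (M.tr s a s' : ℝ≥0∞) * x s'
      = ∑ s' : S, (M.tr s a s' : ℝ≥0∞) * (1 - x s') := by
  have htr : ∑ s' : S, (M.tr s a s' : ℝ≥0∞) = 1 := by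
    rw [← ENNReal.coe_finset_sum, M.tr_sum s a ha, ENNReal.coe_one]
  have key : (∑ s' : S, (M.tr s a s' : ℝ≥0∞) * (1 - x s'))
      + ∑ s' : S, (M.tr s a s' : ℝ≥0∞) * x s' = 1 := by
    rw [← Finset.sum_add_distrib]
    calc ∑ s' : S, ((M.tr s a s' : ℝ≥0∞) * (1 - x s') + (M.tr s a s' : ℝ≥0∞) * x s')
        = ∑ s' : S, (M.tr s a s' : ℝ≥0∞) := Finset.sum_congr rfl fun s' _ => by
          rw [← mul_add, tsub_add_cancel_of_le (hx s'), mul_one]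
      _ = 1 := htr
  have hne : (∑ s' : S, (M.tr s a s' : ℝ≥0∞) * x s') ≠ ⊤ := by
    refine ne_top_of_le_ne_top (by simp : (1 : ℝ≥0∞) ≠ ⊤) ?_
    rw [← htr]
    exact Finset.sum_le_sum fun s' _ => by
      calc _ ≤ (M.tr s a s' : ℝ≥0∞) * 1 := mul_le_mul_right (hx s') _
        _ = _ := mul_one _
  exact (ENNReal.eq_sub_of_add_eq hne key).symm

lemma EEn_sstar_le_Cn : ∀ (n : ℕ) (s : S),
    EEn M w T (sstarAt M w T s) s n ≤ Cn M w T n s := by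
  intro n
  induction n with
  | zero =>
    intro s
    by_cases hs : s ∈ T
    · rw [EEn_mem M w T hs]; exact zero_le
    · rw [EEn_zero M w T hs]; exact zero_le
  | succ n ih =>
    intro s
    by_cases hs : s ∈ T
    · rw [EEn_mem M w T hs]; exact zero_le
    rw [EEn_sstar_succ M w T hs, Cn, if_neg hs]
    have htr : ∑ s' : S, (M.tr s (astar M w T s) s' : ℝ≥0∞) = 1 := by
      rw [← ENNReal.coe_finset_sum, M.tr_sum s _ (astar_avail M w T s), ENNReal.coe_one]
    calc ∑ s' : S, (M.tr s (astar M w T s) s' : ℝ≥0∞) *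
          ((w (astar M w T s) : ℝ≥0∞) * HHn M T (sstarAt M w T s') s' n
            + EEn M w T (sstarAt M w T s') s' n)
        ≤ ∑ s' : S, (M.tr s (astar M w T s) s' : ℝ≥0∞) *
            ((w (astar M w T s) : ℝ≥0∞) + Cn M w T n s') := by
          refine Finset.sum_le_sum fun s' _ => mul_le_mul_right (add_le_add ?_ (ih s')) _
          calc (w (astar M w T s) : ℝ≥0∞) * HHn M T (sstarAt M w T s') s' n
              ≤ (w (astar M w T s) : ℝ≥0∞) * 1 := mul_le_mul_right
                (HHn_le_one M T n s' _ (isStrategy_sstarAt M w T s')) _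
            _ = _ := mul_one _
      _ = (w (astar M w T s) : ℝ≥0∞)
          + ∑ s' : S, (M.tr s (astar M w T s) s' : ℝ≥0∞) * Cn M w T n s' := by
          rw [show (∑ s' : S, (M.tr s (astar M w T s) s' : ℝ≥0∞) *
            ((w (astar M w T s) : ℝ≥0∞) + Cn M w T n s')) = ∑ s' : S,
            ((M.tr s (astar M w T s) s' : ℝ≥0∞) * (w (astar M w T s) : ℝ≥0∞)
              + (M.tr s (astar M w T s) s' : ℝ≥0∞) * Cn M w T n s') from
            Finset.sum_congr rfl fun s' _ => mul_add _ _ _]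
          rw [Finset.sum_add_distrib, ← Finset.sum_mul, htr, one_mul]

lemma nat_mul_sub_le_Cn (hw : ∀ a, 1 ≤ w a) : ∀ (n : ℕ) (s : S),
    (n : ℝ≥0∞) * (1 - HHn M T (sstarAt M w T s) s n) ≤ Cn M w T n s := by
  intro n
  induction n with
  | zero => intro s; simp
  | succ n ih =>
    intro s
    by_cases hs : s ∈ T
    · rw [HHn_mem M T hs]
      simp
    rw [HHn_sstar_succ M w T hs, Cn, if_neg hs]
    rw [one_sub_sum_tr M (astar_avail M w T s) _
      (fun s' => HHn_le_one M T n s' _ (isStrategy_sstarAt M w T s'))]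
    have htr : ∑ s' : S, (M.tr s (astar M w T s) s' : ℝ≥0∞) = 1 := by
      rw [← ENNReal.coe_finset_sum, M.tr_sum s _ (astar_avail M w T s), ENNReal.coe_one]
    calc (↑(n + 1) : ℝ≥0∞) * ∑ s' : S, (M.tr s (astar M w T s) s' : ℝ≥0∞) *
          (1 - HHn M T (sstarAt M w T s') s' n)
        = ∑ s' : S, (M.tr s (astar M w T s) s' : ℝ≥0∞) *
            ((↑(n + 1) : ℝ≥0∞) * (1 - HHn M T (sstarAt M w T s') s' n)) := by
          rw [Finset.mul_sum]
          exact Finset.sum_congr rfl fun s' _ => mul_left_comm _ _ _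
      _ ≤ ∑ s' : S, (M.tr s (astar M w T s) s' : ℝ≥0∞) * (Cn M w T n s' + 1) := by
          refine Finset.sum_le_sum fun s' _ => mul_le_mul_right ?_ _
          rw [Nat.cast_succ, add_mul, one_mul]
          exact add_le_add (ih s') tsub_le_self
      _ = (∑ s' : S, (M.tr s (astar M w T s) s' : ℝ≥0∞) * Cn M w T n s') + 1 := by
          rw [show (∑ s' : S, (M.tr s (astar M w T s) s' : ℝ≥0∞) * (Cn M w T n s' + 1))
            = ∑ s' : S, ((M.tr s (astar M w T s) s' : ℝ≥0∞) * Cn M w T n s'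
              + (M.tr s (astar M w T s) s' : ℝ≥0∞)) from
            Finset.sum_congr rfl fun s' _ => by rw [mul_add, mul_one]]
          rw [Finset.sum_add_distrib, htr]
      _ ≤ (w (astar M w T s) : ℝ≥0∞)
          + ∑ s' : S, (M.tr s (astar M w T s) s' : ℝ≥0∞) * Cn M w T n s' := by
          rw [add_comm]
          refine add_le_add ?_ le_rfl
          exact_mod_cast hw (astar M w T s)

lemma Ex_sstar_le_Vv (hw : ∀ a, 1 ≤ w a) (s : S) :
    Ex M w T (sstarAt M w T s) s ≤ Vv M w T s := by
  by_cases hV : Vv M w T s = ⊤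
  · rw [hV]; exact le_top
  have hE : EE M w T (sstarAt M w T s) s ≤ Vv M w T s := by
    rw [EE_eq_iSup]
    exact iSup_le fun n => (EEn_sstar_le_Cn M w T n s).trans (Cn_le_Vv M w T n s)
  have hx : ∀ n : ℕ, (n : ℝ≥0∞) * (1 - HH M T (sstarAt M w T s) s) ≤ Vv M w T s := by
    intro n
    calc (n : ℝ≥0∞) * (1 - HH M T (sstarAt M w T s) s)
        ≤ (n : ℝ≥0∞) * (1 - HHn M T (sstarAt M w T s) s n) :=
          mul_le_mul_right (tsub_le_tsub_left (HHn_le_HH M T _ s n) 1) _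
      _ ≤ Cn M w T n s := nat_mul_sub_le_Cn M w T hw n s
      _ ≤ Vv M w T s := Cn_le_Vv M w T n s
  have hx0 : 1 - HH M T (sstarAt M w T s) s = 0 := by
    by_contra h0
    have hxt : 1 - HH M T (sstarAt M w T s) s ≠ ⊤ :=
      ne_top_of_le_ne_top (by simp : (1 : ℝ≥0∞) ≠ ⊤) tsub_le_self
    have hdiv : Vv M w T s / (1 - HH M T (sstarAt M w T s) s) ≠ ⊤ := by
      rw [ne_eq, ENNReal.div_eq_top]
      push_neg
      exact ⟨fun _ => h0, fun h => absurd h hV⟩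
    obtain ⟨n, hn⟩ := ENNReal.exists_nat_gt hdiv
    rw [ENNReal.div_lt_iff (Or.inl h0) (Or.inl hxt)] at hn
    exact absurd (hx n) (not_le.2 hn)
  rw [Ex, hx0, zero_mul, add_zero]
  exact hE

end MDPProof

/-- For every finite MDP with strictly positive integer weights and every
target set `T`, there is a pure memoryless strategy that is optimal for the expected
truncated sum: its expectation is at most that of any other strategy. -/
theorem stmt0 {S A : Type} [Fintype S] [Fintype A] (M : MDP S A)
    (w : A → ℕ) (hw : ∀ a, 1 ≤ w a) (T : Finset S) :
    ∃ σstar : Strat S A, IsStrategy M σstar ∧ IsPure σstar ∧ IsMemoryless M σstar ∧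
      ∀ σ : Strat S A, IsStrategy M σ → expTS M σstar w T ≤ expTS M σ w T := by
  classical
  refine ⟨MDPProof.sstarAt M w T M.init, ?_, ?_, ?_, ?_⟩
  · exact MDPProof.isStrategy_sstarAt M w T M.init
  · intro h
    exact ⟨MDPProof.astar M w T (lastState M h), if_pos rfl⟩
  · intro h h' he
    exact congrArg
      (fun z : S => fun a : A => if a = MDPProof.astar M w T z then (1 : ℝ≥0) else 0) he
  · intro σ hσ
    exact le_trans (MDPProof.Ex_sstar_le_Vv M w T hw M.init)
      (MDPProof.Vv_le_Ex M w T M.init σ hσ)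
end

section
/- For every finite MDP D = (S, s_init, A, δ, w) with strictly positive integer weights, every target set T ⊆ S and every threshold ℓ ∈ ℕ, there exists a pure strategy σ* whose choice after a history s₁a₁…s_n depends only on the pair (s_n, min(ℓ+1, Σ_{i=1}^{n-1} w(a_i))) — hence a pure finite-memory strategy with at most ℓ+2 memory states — such that for every strategy σ, P^{σ*}(TS^T ≤ ℓ) ≥ P^{σ}(TS^T ≤ ℓ). -/
open scoped NNReal ENNReal

set_option linter.unusedSectionVars false

section Aux

open Classical

variable {S A : Type} [Fintype S] [Fintype A]

/-- Change the initial state of an MDP. -/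
def Msub (M : MDP S A) (s : S) : MDP S A := { M with init := s }

lemma getLast_congr {α : Type*} (l l' : List α) (h : l = l') (p : l ≠ []) (p' : l' ≠ []) :
    l.getLast p = l'.getLast p' := by subst h; rfl

lemma lastState_cons (M : MDP S A) (p : A × S) (h : List (A × S)) :
    lastState M (p :: h) = lastState (Msub M p.2) h := by
  cases h with
  | nil => rfl
  | cons q l =>
    show (p :: q :: l).getLast?.elim M.init Prod.snd = (q :: l).getLast?.elim (Msub M p.2).init Prod.snd
    rw [List.getLast?_cons_cons, List.getLast?_eq_getLast (l := q :: l) (by simp)]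
    rfl

lemma tsHist_cons (w : A → ℕ) (p : A × S) (h : List (A × S)) :
    tsHist w (p :: h) = w p.1 + tsHist w h := by simp [tsHist]

/-- Shift a strategy by one step. -/
def shiftStrat (σ : Strat S A) (p : A × S) : Strat S A := fun h => σ (p :: h)

lemma probFrom_shift (M : MDP S A) (σ : Strat S A) (p : A × S) :
    ∀ (rest pre : List (A × S)),
      probFrom M σ (p :: pre) rest
        = probFrom (Msub M p.2) (shiftStrat σ p) pre rest := by
  intro rest
  induction rest with
  | nil => intro pre; rfl
  | cons q rest ih =>
    intro pre
    show σ (p :: pre) q.1 * M.tr (lastState M (p :: pre)) q.1 q.2 *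
        probFrom M σ ((p :: pre) ++ [q]) rest = _
    rw [lastState_cons]
    have h2 : (p :: pre) ++ [q] = p :: (pre ++ [q]) := rfl
    rw [h2, ih (pre ++ [q])]
    rfl

lemma probHist_cons (M : MDP S A) (σ : Strat S A) (p : A × S) (rest : List (A × S)) :
    probHist M σ (p :: rest)
      = σ [] p.1 * M.tr M.init p.1 p.2 *
          probHist (Msub M p.2) (shiftStrat σ p) rest := by
  show σ [] p.1 * M.tr (lastState M []) p.1 p.2 * probFrom M σ ([] ++ [p]) rest = _
  rw [List.nil_append, probFrom_shift]
  rfl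

lemma hits_nil (M : MDP S A) (T : Finset S) : Hits M T ([] : List (A × S)) ↔ M.init ∈ T := by
  simp [Hits, stateSeq]

lemma stateSeq_cons (M : MDP S A) (p : A × S) (rest : List (A × S)) :
    stateSeq M (p :: rest) = M.init :: stateSeq (Msub M p.2) rest := by
  simp [stateSeq, Msub]

lemma stateSeq_ne_nil (M : MDP S A) (h : List (A × S)) : stateSeq M h ≠ [] := by
  simp [stateSeq]

lemma not_hits_cons_of_mem (M : MDP S A) (T : Finset S) (hmem : M.init ∈ T)
    (p : A × S) (rest : List (A × S)) : ¬ Hits M T (p :: rest) := by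
  rintro ⟨-, h2⟩
  refine h2 M.init ?_ hmem
  rw [stateSeq_cons, List.dropLast_cons_of_ne_nil (stateSeq_ne_nil _ _)]
  exact List.mem_cons_self

lemma hits_cons_iff (M : MDP S A) (T : Finset S) (hmem : M.init ∉ T)
    (p : A × S) (rest : List (A × S)) :
    Hits M T (p :: rest) ↔ Hits (Msub M p.2) T rest := by
  have hne : stateSeq (Msub M p.2) rest ≠ [] := stateSeq_ne_nil _ _
  have hlast : (stateSeq M (p :: rest)).getLast (stateSeq_ne_nil _ _)
      = (stateSeq (Msub M p.2) rest).getLast hne := by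
    rw [getLast_congr _ _ (stateSeq_cons M p rest) _ (by simp [hne]),
      List.getLast_cons hne]
  have hdrop : (stateSeq M (p :: rest)).dropLast
      = M.init :: (stateSeq (Msub M p.2) rest).dropLast := by
    rw [stateSeq_cons, List.dropLast_cons_of_ne_nil hne]
  constructor
  · rintro ⟨h1, h2⟩
    rw [hlast] at h1
    refine ⟨h1, fun s hs => h2 s ?_⟩
    rw [hdrop]
    exact List.mem_cons_of_mem _ hs
  · rintro ⟨h1, h2⟩
    refine ⟨by rw [hlast]; exact h1, fun s hs => ?_⟩
    rw [hdrop] at hs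
    rcases List.mem_cons.1 hs with rfl | hs
    · exact hmem
    · exact h2 s hs

/-- Indicator form of the summand of `probTSLe`. -/
noncomputable def Fev (M : MDP S A) (σ : Strat S A) (w : A → ℕ) (T : Finset S) (k : ℕ)
    (h : List (A × S)) : ℝ≥0∞ :=
  if Hits M T h ∧ tsHist w h ≤ k then (probHist M σ h : ℝ≥0∞) else 0

lemma probTSLe_eq_tsum_Fev (M : MDP S A) (σ : Strat S A) (w : A → ℕ) (T : Finset S) (k : ℕ) :
    probTSLe M σ w T k = ∑' h : List (A × S), Fev M σ w T k h :=
  calc probTSLe M σ w T k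
      = ∑' x : {h : List (A × S) | Hits M T h ∧ tsHist w h ≤ k},
          (probHist M σ x.1 : ℝ≥0∞) := rfl
    _ = ∑' h : List (A × S), Set.indicator {h : List (A × S) | Hits M T h ∧ tsHist w h ≤ k}
          (fun h => (probHist M σ h : ℝ≥0∞)) h :=
        tsum_subtype {h : List (A × S) | Hits M T h ∧ tsHist w h ≤ k}
          (fun h => (probHist M σ h : ℝ≥0∞))
    _ = ∑' h : List (A × S), Fev M σ w T k h := by
        refine tsum_congr fun h => ?_
        simp [Set.indicator_apply, Fev, Set.mem_setOf_eq]

lemma tsum_list (f : List (A × S) → ℝ≥0∞) :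
    ∑' l : List (A × S), f l = f [] + ∑' p : (A × S) × List (A × S), f (p.1 :: p.2) := by
  rw [ENNReal.tsum_eq_add_tsum_ite ([] : List (A × S))]
  congr 1
  have hinj : Function.Injective (fun p : (A × S) × List (A × S) => p.1 :: p.2) := by
    rintro ⟨a, l⟩ ⟨b, m⟩ h
    simpa [Prod.ext_iff] using h
  have hsupp : Function.support (fun l : List (A × S) => if l = [] then 0 else f l)
      ⊆ Set.range (fun p : (A × S) × List (A × S) => p.1 :: p.2) := by
    rintro l hl
    rcases l with _ | ⟨p, l⟩
    · simp at hl
    · exact ⟨(p, l), rfl⟩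
  have h3 := hinj.tsum_eq (f := fun l => if l = [] then 0 else f l) hsupp
  have h4 : (∑' c : (A × S) × List (A × S), if (c.1 :: c.2 : List (A × S)) = [] then 0
      else f (c.1 :: c.2)) = ∑' p : (A × S) × List (A × S), f (p.1 :: p.2) :=
    tsum_congr fun p => by simp
  convert h3.symm.trans h4 using 2
  funext x
  congr 1

/-- The one-step unfolding of `probTSLe` (in indicator form). -/
lemma Fev_rec (M : MDP S A) (σ : Strat S A) (w : A → ℕ) (hw : ∀ a, 1 ≤ w a)
    (T : Finset S) (k : ℕ) :
    (∑' h : List (A × S), Fev M σ w T k h)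
      = if M.init ∈ T then 1
        else ∑ a : A, ∑ s' : S, (σ [] a : ℝ≥0∞) * (M.tr M.init a s' : ℝ≥0∞) *
          (if w a ≤ k then
            ∑' h : List (A × S), Fev (Msub M s') (shiftStrat σ (a, s')) w T (k - w a) h
           else 0) := by
  rw [tsum_list]
  by_cases hmem : M.init ∈ T
  · rw [if_pos hmem]
    have h0 : ∀ p : (A × S) × List (A × S), Fev M σ w T k (p.1 :: p.2) = 0 := by
      intro p
      simp [Fev, not_hits_cons_of_mem M T hmem p.1 p.2]
    have h1 : Fev M σ w T k [] = 1 := by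
      simp [Fev, hits_nil, hmem, tsHist, probHist, probFrom]
    simp [h0, h1]
  · rw [if_neg hmem]
    have h1 : Fev M σ w T k [] = 0 := by
      simp [Fev, hits_nil, hmem]
    rw [h1, zero_add]
    have key : ∀ (a : A) (s' : S) (rest : List (A × S)),
        Fev M σ w T k ((a, s') :: rest)
          = (σ [] a : ℝ≥0∞) * (M.tr M.init a s' : ℝ≥0∞) *
            (if w a ≤ k then
              Fev (Msub M s') (shiftStrat σ (a, s')) w T (k - w a) rest else 0) := by
      intro a s' rest
      simp only [Fev, hits_cons_iff M T hmem, tsHist_cons, probHist_cons]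
      by_cases hwa : w a ≤ k
      · rw [if_pos hwa]
        by_cases hh : Hits (Msub M ((a, s') : A × S).2) T rest ∧ tsHist w rest ≤ k - w a
        · rw [if_pos ⟨hh.1, by omega⟩, if_pos hh]
          push_cast
          ring
        · rw [if_neg ?hx, if_neg hh, mul_zero]
          case hx =>
            rw [not_and_or] at hh ⊢
            rcases hh with hh | hh
            · exact Or.inl hh
            · exact Or.inr (by omega)
      · rw [if_neg hwa, if_neg (by rintro ⟨-, hts⟩; omega), mul_zero]
    calc ∑' p : (A × S) × List (A × S), Fev M σ w T k (p.1 :: p.2)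
        = ∑' (q : A × S) (rest : List (A × S)), Fev M σ w T k ((q, rest).1 :: (q, rest).2) :=
          ENNReal.tsum_prod' (f := fun p : (A × S) × List (A × S) => Fev M σ w T k (p.1 :: p.2))
      _ = ∑ q : A × S, ∑' rest : List (A × S), Fev M σ w T k (q :: rest) := by
          rw [tsum_fintype]
      _ = _ := by
          rw [Fintype.sum_prod_type]
          refine Finset.sum_congr rfl fun a _ => Finset.sum_congr rfl fun s' _ => ?_
          have h2 : ∑' rest : List (A × S), Fev M σ w T k ((a, s') :: rest)
              = ∑' rest : List (A × S), (σ [] a : ℝ≥0∞) * (M.tr M.init a s' : ℝ≥0∞) *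
                (if w a ≤ k then
                  Fev (Msub M s') (shiftStrat σ (a, s')) w T (k - w a) rest else 0) :=
            tsum_congr fun rest => key a s' rest
          rw [h2, ENNReal.tsum_mul_left]
          by_cases hwa : w a ≤ k
          · simp [hwa, ENNReal.tsum_mul_left]
          · simp [hwa]

end Aux
section Aux2

open Classical

variable {S A : Type} [Fintype S] [Fintype A]

lemma Msub_init (M : MDP S A) (s : S) : (Msub M s).init = s := rfl
lemma Msub_tr (M : MDP S A) (s : S) : (Msub M s).tr = M.tr := rfl
lemma Msub_avail (M : MDP S A) (s : S) : (Msub M s).avail = M.avail := rfl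
lemma Msub_Msub (M : MDP S A) (s s' : S) : Msub (Msub M s) s' = Msub M s' := rfl

/-- Optimal value for reaching `T` with remaining budget `k` from state `s`. -/
noncomputable def val (M : MDP S A) (w : A → ℕ) (T : Finset S) : ℕ → S → ℝ≥0∞
  | k, s =>
    if s ∈ T then 1
    else (M.avail s).sup fun a =>
      if _ : w a ≤ k ∧ 1 ≤ w a then
        ∑ s' : S, (M.tr s a s' : ℝ≥0∞) * val M w T (k - w a) s'
      else 0
  termination_by k _ => k
  decreasing_by omega

/-- An optimal action for budget `k` in state `s`. -/
noncomputable def act (M : MDP S A) (w : A → ℕ) (T : Finset S) (k : ℕ) (s : S) : A :=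
  (Finset.exists_mem_eq_sup (M.avail s) (M.avail_nonempty s)
    (fun a => if _ : w a ≤ k ∧ 1 ≤ w a then
        ∑ s' : S, (M.tr s a s' : ℝ≥0∞) * val M w T (k - w a) s'
      else 0)).choose

lemma act_mem (M : MDP S A) (w : A → ℕ) (T : Finset S) (k : ℕ) (s : S) :
    act M w T k s ∈ M.avail s :=
  (Finset.exists_mem_eq_sup (M.avail s) (M.avail_nonempty s) _).choose_spec.1

lemma act_spec (M : MDP S A) (w : A → ℕ) (T : Finset S) (k : ℕ) (s : S) :
    ((M.avail s).sup fun a =>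
      if _ : w a ≤ k ∧ 1 ≤ w a then
        ∑ s' : S, (M.tr s a s' : ℝ≥0∞) * val M w T (k - w a) s'
      else 0)
    = if _ : w (act M w T k s) ≤ k ∧ 1 ≤ w (act M w T k s) then
        ∑ s' : S, (M.tr s (act M w T k s) s' : ℝ≥0∞) * val M w T (k - w (act M w T k s)) s'
      else 0 :=
  (Finset.exists_mem_eq_sup (M.avail s) (M.avail_nonempty s) _).choose_spec.2

lemma shift_isStrategy (M : MDP S A) (s : S) (σ : Strat S A) (p : A × S)
    (hσ : IsStrategy (Msub M s) σ) : IsStrategy (Msub M p.2) (shiftStrat σ p) := by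
  intro h
  obtain ⟨h1, h2⟩ := hσ (p :: h)
  rw [lastState_cons, Msub_Msub] at h1
  exact ⟨h1, h2⟩

/-- Any strategy achieves at most `val`. -/
lemma le_val (M : MDP S A) (w : A → ℕ) (hw : ∀ a, 1 ≤ w a) (T : Finset S) :
    ∀ (k : ℕ) (s : S) (σ : Strat S A), IsStrategy (Msub M s) σ →
      (∑' h : List (A × S), Fev (Msub M s) σ w T k h) ≤ val M w T k s := by
  intro k
  induction k using Nat.strong_induction_on with
  | _ k ih =>
    intro s σ hσ
    rw [Fev_rec _ _ _ hw, val]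
    simp only [Msub_init, Msub_tr, Msub_Msub]
    by_cases hsT : s ∈ T
    · simp [hsT]
    · simp only [if_neg hsT]
      refine (if_neg hsT).trans_le ?_
      have hsum1 : ∑ a : A, (σ [] a : ℝ≥0∞) = 1 := by
        rw [← ENNReal.coe_finset_sum, (hσ []).2, ENNReal.coe_one]
      calc ∑ a : A, ∑ s' : S, (σ [] a : ℝ≥0∞) * (M.tr s a s' : ℝ≥0∞) *
              (if w a ≤ k then
                ∑' h : List (A × S), Fev (Msub M s') (shiftStrat σ (a, s')) w T (k - w a) h
               else 0)
          ≤ ∑ a : A, (σ [] a : ℝ≥0∞) * ((M.avail s).sup fun a =>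
              if _ : w a ≤ k ∧ 1 ≤ w a then
                ∑ s' : S, (M.tr s a s' : ℝ≥0∞) * val M w T (k - w a) s'
              else 0) := by
            refine Finset.sum_le_sum fun a _ => ?_
            by_cases ha : a ∈ M.avail s
            · have step1 : ∀ s' : S,
                  (σ [] a : ℝ≥0∞) * (M.tr s a s' : ℝ≥0∞) *
                    (if w a ≤ k then
                      ∑' h : List (A × S), Fev (Msub M s') (shiftStrat σ (a, s')) w T (k - w a) h
                     else 0)
                  ≤ (σ [] a : ℝ≥0∞) * ((M.tr s a s' : ℝ≥0∞) *
                      (if w a ≤ k then val M w T (k - w a) s' else 0)) := by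
                intro s'
                rw [mul_assoc]
                refine mul_le_mul_right (mul_le_mul_right ?_ _) _
                by_cases hwa : w a ≤ k
                · rw [if_pos hwa, if_pos hwa]
                  exact ih (k - w a) (by have := hw a; omega) s' _
                    (shift_isStrategy M s σ (a, s') hσ)
                · rw [if_neg hwa, if_neg hwa]
              calc ∑ s' : S, (σ [] a : ℝ≥0∞) * (M.tr s a s' : ℝ≥0∞) *
                    (if w a ≤ k then
                      ∑' h : List (A × S), Fev (Msub M s') (shiftStrat σ (a, s')) w T (k - w a) h
                     else 0)
                  ≤ ∑ s' : S, (σ [] a : ℝ≥0∞) * ((M.tr s a s' : ℝ≥0∞) *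
                      (if w a ≤ k then val M w T (k - w a) s' else 0)) :=
                    Finset.sum_le_sum fun s' _ => step1 s'
                _ = (σ [] a : ℝ≥0∞) * ∑ s' : S, (M.tr s a s' : ℝ≥0∞) *
                      (if w a ≤ k then val M w T (k - w a) s' else 0) :=
                    (Finset.mul_sum _ _ _).symm
                _ ≤ _ := by
                    refine mul_le_mul_right ?_ _
                    refine le_trans ?_ (Finset.le_sup ha)
                    by_cases hwa : w a ≤ k
                    · rw [dif_pos ⟨hwa, hw a⟩]
                      exact le_of_eq (Finset.sum_congr rfl fun s' _ => by rw [if_pos hwa])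
                    · rw [dif_neg (by omega)]
                      simp [hwa]
            · have h0 : σ [] a = 0 := (hσ []).1 a ha
              simp [h0]
        _ = _ := by rw [← Finset.sum_mul, hsum1, one_mul]

/-- The finite-memory strategy defined by `act`. -/
noncomputable def tau (M : MDP S A) (w : A → ℕ) (T : Finset S) (s : S) (b : ℕ) :
    Strat S A :=
  fun h a => if a = act M w T (b - tsHist w h) (lastState (Msub M s) h) then 1 else 0

lemma tau_shift (M : MDP S A) (w : A → ℕ) (T : Finset S) (s : S) (b : ℕ) (a : A) (s' : S) :
    shiftStrat (tau M w T s b) (a, s') = tau M w T s' (b - w a) := by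
  funext h a'
  simp only [shiftStrat, tau, lastState_cons, Msub_Msub, tsHist_cons]
  rw [Nat.sub_sub]

lemma tau_nil (M : MDP S A) (w : A → ℕ) (T : Finset S) (s : S) (b : ℕ) (a : A) :
    tau M w T s b [] a = if a = act M w T b s then 1 else 0 := by
  have : lastState (Msub M s) ([] : List (A × S)) = s := rfl
  simp [tau, tsHist, this]

/-- The strategy `tau` achieves at least `val`. -/
lemma ge_val (M : MDP S A) (w : A → ℕ) (hw : ∀ a, 1 ≤ w a) (T : Finset S) :
    ∀ (k : ℕ) (s : S),
      val M w T k s ≤ ∑' h : List (A × S), Fev (Msub M s) (tau M w T s k) w T k h := by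
  intro k
  induction k using Nat.strong_induction_on with
  | _ k ih =>
    intro s
    rw [Fev_rec _ _ _ hw, val]
    simp only [Msub_init, Msub_tr, Msub_Msub]
    by_cases hsT : s ∈ T
    · simp [hsT]
    · simp only [if_neg hsT]
      refine le_of_le_of_eq ?_ (if_neg hsT).symm
      rw [act_spec M w T k s]
      set a0 := act M w T k s with ha0
      have hterm : ∀ a : A, ∑ s' : S, ((tau M w T s k [] a : ℝ≥0) : ℝ≥0∞) *
            (M.tr s a s' : ℝ≥0∞) *
            (if w a ≤ k then
              ∑' h : List (A × S),
                Fev (Msub M s') (shiftStrat (tau M w T s k) (a, s')) w T (k - w a) h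
             else 0)
          = if a = a0 then
              ∑ s' : S, (M.tr s a0 s' : ℝ≥0∞) *
                (if w a0 ≤ k then
                  ∑' h : List (A × S),
                    Fev (Msub M s') (tau M w T s' (k - w a0)) w T (k - w a0) h
                 else 0)
            else 0 := by
        intro a
        by_cases haa : a = a0
        · subst haa
          rw [if_pos rfl]
          refine Finset.sum_congr rfl fun s' _ => ?_
          rw [tau_nil, if_pos rfl, tau_shift]
          simp
        · rw [if_neg haa]
          refine Finset.sum_eq_zero fun s' _ => ?_
          rw [tau_nil, if_neg haa]
          simp
      rw [Finset.sum_congr rfl fun a _ => hterm a, Finset.sum_ite_eq' Finset.univ a0]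
      rw [if_pos (Finset.mem_univ a0)]
      by_cases hwa : w a0 ≤ k
      · rw [dif_pos ⟨hwa, hw a0⟩]
        refine Finset.sum_le_sum fun s' _ => ?_
        rw [if_pos hwa]
        exact mul_le_mul_right (ih (k - w a0) (by have := hw a0; omega) s') _
      · rw [dif_neg (by omega)]
        exact zero_le

end Aux2
open Classical
/-- For every finite MDP with strictly positive integer weights, target
set `T` and threshold `ℓ`, there is a pure strategy whose choice only depends on the last
state of the history together with `min (ℓ+1) (accumulated weight)` — hence a pure
finite-memory strategy with at most `ℓ+2` memory states — which maximizes the probability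
that the truncated sum is at most `ℓ`. -/
theorem stmt1 {S A : Type} [Fintype S] [Fintype A] (M : MDP S A)
    (w : A → ℕ) (hw : ∀ a, 1 ≤ w a) (T : Finset S) (ℓ : ℕ) :
    ∃ σstar : Strat S A, IsStrategy M σstar ∧ IsPure σstar ∧
      (∀ h h' : List (A × S), lastState M h = lastState M h' →
        min (ℓ + 1) (tsHist w h) = min (ℓ + 1) (tsHist w h') → σstar h = σstar h') ∧
      ∀ σ : Strat S A, IsStrategy M σ →
        probTSLe M σ w T ℓ ≤ probTSLe M σstar w T ℓ := by
  have hMsub : Msub M M.init = M := rfl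
  refine ⟨tau M w T M.init ℓ, ?_, ?_, ?_, ?_⟩
  · intro h
    constructor
    · intro a ha
      simp only [tau, hMsub]
      rw [if_neg]
      intro heq
      exact ha (heq ▸ act_mem M w T (ℓ - tsHist w h) (lastState M h))
    · simp [tau, Finset.sum_ite_eq']
  · intro h
    exact ⟨act M w T (ℓ - tsHist w h) (lastState (Msub M M.init) h), if_pos rfl⟩
  · intro h h' h1 h2
    have h3 : ℓ - tsHist w h = ℓ - tsHist w h' := by omega
    funext a
    simp only [tau, hMsub, h1, h3]
  · intro σ hσ
    rw [probTSLe_eq_tsum_Fev, probTSLe_eq_tsum_Fev]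
    have h1 := le_val M w hw T ℓ M.init σ (by rwa [hMsub])
    have h2 := ge_val M w hw T ℓ M.init
    rw [hMsub] at h1 h2
    exact h1.trans h2
end

section
/- For every finite MDP D = (S, s_init, A, δ, w) with strictly positive integer weights, every target set T ⊆ S and every threshold ℓ ∈ ℕ: if there exists a strategy σ such that every run consistent with σ satisfies TS^T(ρ) ≤ ℓ, then there exists a pure memoryless strategy σ' such that every run consistent with σ' satisfies TS^T(ρ) ≤ ℓ. -/
open scoped NNReal ENNReal

section Aux

variable {S A : Type} [Fintype S] [Fintype A]

/-- `Good M w T n s`: from `s` one can surely reach `T` with total weight at most `n`. -/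
inductive Good (M : MDP S A) (w : A → ℕ) (T : Finset S) : ℕ → S → Prop
  | target (n : ℕ) (s : S) (hs : s ∈ T) : Good M w T n s
  | step (n : ℕ) (s : S) (a : A) (ha : a ∈ M.avail s) (hwa : w a ≤ n)
      (hsucc : ∀ s', 0 < M.tr s a s' → Good M w T (n - w a) s') : Good M w T n s

lemma Good.mono {M : MDP S A} {w : A → ℕ} {T : Finset S} {n : ℕ} {s : S}
    (h : Good M w T n s) : ∀ m, n ≤ m → Good M w T m s := by
  induction h with
  | target n s hs => exact fun m _ => .target m s hs
  | step n s a ha hwa hsucc ih =>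
      exact fun m hm => .step m s a ha (hwa.trans hm)
        (fun s' h' => ih s' h' _ (Nat.sub_le_sub_right hm _))

lemma good_iff {M : MDP S A} {w : A → ℕ} {T : Finset S} {n : ℕ} {s : S} :
    Good M w T n s ↔ s ∈ T ∨ ∃ a, a ∈ M.avail s ∧ w a ≤ n ∧
      ∀ s', 0 < M.tr s a s' → Good M w T (n - w a) s' := by
  constructor
  · rintro (⟨n, s, hs⟩ | ⟨n, s, a, ha, hwa, hsucc⟩)
    · exact Or.inl hs
    · exact Or.inr ⟨a, ha, hwa, hsucc⟩
  · rintro (hs | ⟨a, ha, hwa, hsucc⟩)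
    · exact .target n s hs
    · exact .step n s a ha hwa hsucc

lemma not_good {M : MDP S A} {w : A → ℕ} {T : Finset S} {n : ℕ} {s : S}
    (h : ¬ Good M w T n s) : s ∉ T ∧ ∀ a, a ∈ M.avail s → w a ≤ n →
      ∃ s', 0 < M.tr s a s' ∧ ¬ Good M w T (n - w a) s' := by
  rw [good_iff] at h
  push_neg at h
  exact h

lemma lastState_append (M : MDP S A) (h : List (A × S)) (p : A × S) :
    lastState M (h ++ [p]) = p.2 := by
  simp [lastState]

lemma tsHist_append (w : A → ℕ) (h : List (A × S)) (p : A × S) :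
    tsHist w (h ++ [p]) = tsHist w h + w p.1 := by
  simp [tsHist]

lemma lastState_ofFn (M : MDP S A) (ρ : ℕ → A × S) (n : ℕ) :
    lastState M (List.ofFn fun i : Fin n => ρ i) = stateAt M ρ n := by
  cases n with
  | zero => simp [lastState, stateAt]
  | succ n =>
      rw [List.ofFn_succ', List.concat_eq_append, lastState_append]
      simp [stateAt]

lemma exists_pos_tr (M : MDP S A) {s : S} {a : A} (ha : a ∈ M.avail s) :
    ∃ s', 0 < M.tr s a s' := by
  by_contra hc
  push_neg at hc
  have h0 : ∀ s', M.tr s a s' = 0 := fun s' => le_antisymm (hc s') zero_le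
  have := M.tr_sum s a ha
  simp [h0] at this

lemma exists_pos_act {M : MDP S A} {σ : Strat S A} (hσ : IsStrategy M σ)
    (h : List (A × S)) : ∃ a, 0 < σ h a := by
  by_contra hc
  push_neg at hc
  have h0 : ∀ a, σ h a = 0 := fun a => le_antisymm (hc a) zero_le
  have := (hσ h).2
  simp [h0] at this

/-! ### The bad run: a consistent run witnessing failure when `Good ℓ init` fails -/

noncomputable def badAct (M : MDP S A) (σ : Strat S A) (h : List (A × S)) : A :=
  if ha : ∃ a, 0 < σ h a then ha.choose else (M.avail_nonempty (lastState M h)).choose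

open Classical in
noncomputable def badSucc (M : MDP S A) (w : A → ℕ) (T : Finset S) (ℓ : ℕ)
    (σ : Strat S A) (h : List (A × S)) : S :=
  if hb : ∃ s', 0 < M.tr (lastState M h) (badAct M σ h) s' ∧
      ¬ Good M w T (ℓ - (tsHist w h + w (badAct M σ h))) s' then hb.choose
  else if hc : ∃ s', 0 < M.tr (lastState M h) (badAct M σ h) s' then hc.choose
  else M.init

noncomputable def badHist (M : MDP S A) (w : A → ℕ) (T : Finset S) (ℓ : ℕ)
    (σ : Strat S A) : ℕ → List (A × S)
  | 0 => []
  | n + 1 => badHist M w T ℓ σ n ++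
      [(badAct M σ (badHist M w T ℓ σ n), badSucc M w T ℓ σ (badHist M w T ℓ σ n))]

noncomputable def badRun (M : MDP S A) (w : A → ℕ) (T : Finset S) (ℓ : ℕ)
    (σ : Strat S A) (n : ℕ) : A × S :=
  (badAct M σ (badHist M w T ℓ σ n), badSucc M w T ℓ σ (badHist M w T ℓ σ n))

lemma badHist_succ (M : MDP S A) (w : A → ℕ) (T : Finset S) (ℓ : ℕ) (σ : Strat S A)
    (n : ℕ) : badHist M w T ℓ σ (n + 1) = badHist M w T ℓ σ n ++ [badRun M w T ℓ σ n] :=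
  rfl

lemma badHist_eq_ofFn (M : MDP S A) (w : A → ℕ) (T : Finset S) (ℓ : ℕ) (σ : Strat S A)
    (n : ℕ) : badHist M w T ℓ σ n = List.ofFn fun i : Fin n => badRun M w T ℓ σ i := by
  induction n with
  | zero => rfl
  | succ n ih =>
      rw [List.ofFn_succ', List.concat_eq_append]
      simp only [Fin.coe_castSucc, Fin.val_last]
      rw [← ih, badHist_succ]

lemma stateAt_bad (M : MDP S A) (w : A → ℕ) (T : Finset S) (ℓ : ℕ) (σ : Strat S A)
    (n : ℕ) : stateAt M (badRun M w T ℓ σ) n = lastState M (badHist M w T ℓ σ n) := by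
  cases n with
  | zero => simp [stateAt, lastState, badHist]
  | succ n => rw [badHist_succ, lastState_append]; rfl

lemma badAct_pos {M : MDP S A} {σ : Strat S A} (hσ : IsStrategy M σ)
    (h : List (A × S)) : 0 < σ h (badAct M σ h) := by
  have ha := exists_pos_act hσ h
  rw [badAct, dif_pos ha]
  exact ha.choose_spec

lemma badAct_avail {M : MDP S A} {σ : Strat S A} (hσ : IsStrategy M σ)
    (h : List (A × S)) : badAct M σ h ∈ M.avail (lastState M h) := by
  by_contra hc
  exact (badAct_pos hσ h).ne' ((hσ h).1 _ hc)

lemma badSucc_pos {M : MDP S A} {w : A → ℕ} {T : Finset S} {ℓ : ℕ} {σ : Strat S A}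
    (hσ : IsStrategy M σ) (h : List (A × S)) :
    0 < M.tr (lastState M h) (badAct M σ h) (badSucc M w T ℓ σ h) := by
  have hc : ∃ s', 0 < M.tr (lastState M h) (badAct M σ h) s' :=
    exists_pos_tr M (badAct_avail hσ h)
  rw [badSucc]
  by_cases h1 : ∃ s', 0 < M.tr (lastState M h) (badAct M σ h) s' ∧
      ¬ Good M w T (ℓ - (tsHist w h + w (badAct M σ h))) s'
  · rw [dif_pos h1]; exact h1.choose_spec.1
  · rw [dif_neg h1, dif_pos hc]; exact hc.choose_spec

lemma badSucc_bad {M : MDP S A} {w : A → ℕ} {T : Finset S} {ℓ : ℕ} {σ : Strat S A}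
    (hσ : IsStrategy M σ) (h : List (A × S))
    (hsum : tsHist w h + w (badAct M σ h) ≤ ℓ)
    (hng : ¬ Good M w T (ℓ - tsHist w h) (lastState M h)) :
    ¬ Good M w T (ℓ - (tsHist w h + w (badAct M σ h))) (badSucc M w T ℓ σ h) := by
  obtain ⟨hT, hall⟩ := not_good hng
  have hwa : w (badAct M σ h) ≤ ℓ - tsHist w h := by omega
  obtain ⟨s', hs'pos, hs'bad⟩ := hall _ (badAct_avail hσ h) hwa
  have heq : ℓ - tsHist w h - w (badAct M σ h) = ℓ - (tsHist w h + w (badAct M σ h)) :=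
    Nat.sub_sub _ _ _
  have hb : ∃ s', 0 < M.tr (lastState M h) (badAct M σ h) s' ∧
      ¬ Good M w T (ℓ - (tsHist w h + w (badAct M σ h))) s' :=
    ⟨s', hs'pos, heq ▸ hs'bad⟩
  rw [badSucc, dif_pos hb]
  exact hb.choose_spec.2

lemma tsHist_badHist (M : MDP S A) (w : A → ℕ) (T : Finset S) (ℓ : ℕ) (σ : Strat S A)
    (n : ℕ) : tsHist w (badHist M w T ℓ σ n) = ∑ i ∈ Finset.range n, w (badRun M w T ℓ σ i).1 := by
  induction n with
  | zero => rfl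
  | succ n ih => rw [badHist_succ, tsHist_append, Finset.sum_range_succ, ih]

lemma bad_invariant {M : MDP S A} {w : A → ℕ} {T : Finset S} {ℓ : ℕ} {σ : Strat S A}
    (hσ : IsStrategy M σ) (hng : ¬ Good M w T ℓ M.init) (n : ℕ)
    (hle : tsHist w (badHist M w T ℓ σ n) ≤ ℓ) :
    ¬ Good M w T (ℓ - tsHist w (badHist M w T ℓ σ n)) (lastState M (badHist M w T ℓ σ n)) := by
  induction n with
  | zero => simpa [tsHist, lastState, badHist] using hng
  | succ n ih =>
      rw [badHist_succ, tsHist_append] at hle ⊢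
      rw [lastState_append]
      have hprev := ih (le_trans (Nat.le_add_right _ _) hle)
      exact badSucc_bad hσ _ hle hprev

lemma bad_consistent {M : MDP S A} {w : A → ℕ} {T : Finset S} {ℓ : ℕ} {σ : Strat S A}
    (hσ : IsStrategy M σ) : Consistent M σ (badRun M w T ℓ σ) := by
  intro n
  have hof : (List.ofFn fun i : Fin n => badRun M w T ℓ σ i) = badHist M w T ℓ σ n :=
    (badHist_eq_ofFn M w T ℓ σ n).symm
  have hst : stateAt M (badRun M w T ℓ σ) n = lastState M (badHist M w T ℓ σ n) :=
    stateAt_bad M w T ℓ σ n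
  refine ⟨?_, ?_, ?_⟩
  · rw [hst]; exact badAct_avail hσ _
  · rw [hof]; exact badAct_pos hσ _
  · rw [hst]; exact badSucc_pos (w := w) (T := T) (ℓ := ℓ) hσ _

lemma good_init {M : MDP S A} {w : A → ℕ} {T : Finset S} {ℓ : ℕ} {σ : Strat S A}
    (hσ : IsStrategy M σ)
    (hall : ∀ ρ : ℕ → A × S, Consistent M σ ρ → tsRun M w T ρ ≤ (ℓ : ℝ≥0∞)) :
    Good M w T ℓ M.init := by
  classical
  by_contra hng
  have hle := hall _ (bad_consistent (w := w) (T := T) (ℓ := ℓ) hσ)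
  have hkey : ∀ n, stateAt M (badRun M w T ℓ σ) n ∈ T →
      ℓ < ∑ i ∈ Finset.range n, w (badRun M w T ℓ σ i).1 := by
    intro n hn
    by_contra hle'
    push_neg at hle'
    rw [← tsHist_badHist] at hle'
    have hbad := bad_invariant hσ hng n hle'
    rw [stateAt_bad] at hn
    exact hbad (Good.target _ _ hn)
  unfold tsRun at hle
  split_ifs at hle with hh
  · have h1 := hkey _ (Nat.find_spec hh)
    have h2 : (∑ i ∈ Finset.range (Nat.find hh) , w (badRun M w T ℓ σ i).1) ≤ ℓ := by
      exact_mod_cast hle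
    omega
  · exact (ENNReal.natCast_ne_top ℓ) (top_le_iff.mp hle)

/-! ### The pure memoryless strategy -/

open Classical in
noncomputable def pick (M : MDP S A) (w : A → ℕ) (T : Finset S) (s : S) : A :=
  if h : ∃ a, a ∈ M.avail s ∧ (s ∉ T → ∀ m, Good M w T m s → w a ≤ m ∧
      ∀ s', 0 < M.tr s a s' → Good M w T (m - w a) s')
  then h.choose else (M.avail_nonempty s).choose

lemma pick_avail (M : MDP S A) (w : A → ℕ) (T : Finset S) (s : S) :
    pick M w T s ∈ M.avail s := by
  rw [pick]
  split_ifs with h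
  · exact h.choose_spec.1
  · exact (M.avail_nonempty s).choose_spec

lemma pick_spec (M : MDP S A) (w : A → ℕ) (T : Finset S) {s : S} {m : ℕ}
    (hsT : s ∉ T) (hgood : Good M w T m s) :
    w (pick M w T s) ≤ m ∧
      ∀ s', 0 < M.tr s (pick M w T s) s' → Good M w T (m - w (pick M w T s)) s' := by
  classical
  have hex : ∃ n, Good M w T n s := ⟨m, hgood⟩
  have hmin := Nat.find_spec hex
  obtain (h | ⟨a, ha, hwa, hsucc⟩) := good_iff.mp hmin
  · exact absurd h hsT
  have hcond : ∃ a, a ∈ M.avail s ∧ (s ∉ T → ∀ m', Good M w T m' s → w a ≤ m' ∧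
      ∀ s', 0 < M.tr s a s' → Good M w T (m' - w a) s') := by
    refine ⟨a, ha, fun _ m' hg' => ?_⟩
    have hfind : Nat.find hex ≤ m' := Nat.find_min' hex hg'
    exact ⟨hwa.trans hfind, fun s' hs' =>
      (hsucc s' hs').mono _ (Nat.sub_le_sub_right hfind _)⟩
  rw [pick, dif_pos hcond]
  exact hcond.choose_spec.2 hsT m hgood

end Aux

/-- If some strategy guarantees that every consistent run reaches `T`
with truncated sum at most `ℓ`, then some pure memoryless strategy does as well. -/
theorem stmt2 {S A : Type} [Fintype S] [Fintype A] (M : MDP S A)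
    (w : A → ℕ) (hw : ∀ a, 1 ≤ w a) (T : Finset S) (ℓ : ℕ)
    (hex : ∃ σ : Strat S A, IsStrategy M σ ∧
      ∀ ρ : ℕ → A × S, Consistent M σ ρ → tsRun M w T ρ ≤ (ℓ : ℝ≥0∞)) :
    ∃ σ' : Strat S A, IsStrategy M σ' ∧ IsPure σ' ∧ IsMemoryless M σ' ∧
      ∀ ρ : ℕ → A × S, Consistent M σ' ρ → tsRun M w T ρ ≤ (ℓ : ℝ≥0∞) := by
  classical
  obtain ⟨σ, hσ, hall⟩ := hex
  have hgood : Good M w T ℓ M.init := good_init hσ hall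
  refine ⟨fun h a => if a = pick M w T (lastState M h) then 1 else 0, ?_, ?_, ?_, ?_⟩
  · intro h
    refine ⟨?_, ?_⟩
    · intro a haa
      show (if a = pick M w T (lastState M h) then (1 : ℝ≥0) else 0) = 0
      rw [if_neg]
      rintro rfl
      exact haa (pick_avail M w T _)
    · simp
  · intro h
    exact ⟨pick M w T (lastState M h), if_pos rfl⟩
  · intro h h' he
    funext a
    show (if a = pick M w T (lastState M h) then (1 : ℝ≥0) else 0)
      = (if a = pick M w T (lastState M h') then (1 : ℝ≥0) else 0)
    rw [he]
  · intro ρ hcons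
    have hact : ∀ n, (ρ n).1 = pick M w T (stateAt M ρ n) := by
      intro n
      have hpos : 0 < if (ρ n).1 = pick M w T (lastState M (List.ofFn fun i : Fin n => ρ i))
          then (1 : ℝ≥0) else 0 := (hcons n).2.1
      rw [lastState_ofFn M ρ n] at hpos
      by_contra hne
      rw [if_neg hne] at hpos
      exact lt_irrefl 0 hpos
    have hinv : ∀ n, (∀ i, i < n → stateAt M ρ i ∉ T) →
        (∑ i ∈ Finset.range n, w (ρ i).1) ≤ ℓ ∧
        Good M w T (ℓ - ∑ i ∈ Finset.range n, w (ρ i).1) (stateAt M ρ n) := by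
      intro n
      induction n with
      | zero => intro _; simpa [stateAt] using hgood
      | succ n ih =>
          intro hno
          obtain ⟨hc, hg⟩ := ih (fun i hi => hno i (hi.trans (Nat.lt_succ_self n)))
          have hsT : stateAt M ρ n ∉ T := hno n (Nat.lt_succ_self n)
          obtain ⟨hwle, hsucc⟩ := pick_spec M w T hsT hg
          rw [← hact n] at hwle hsucc
          have htr := (hcons n).2.2
          have hgood' := hsucc _ htr
          rw [Finset.sum_range_succ]
          refine ⟨by omega, ?_⟩
          have heq : ℓ - (∑ i ∈ Finset.range n, w (ρ i).1 + w (ρ n).1)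
              = (ℓ - ∑ i ∈ Finset.range n, w (ρ i).1) - w (ρ n).1 := (Nat.sub_sub _ _ _).symm
          rw [heq]
          exact hgood'
    have hhit : ∃ n, stateAt M ρ n ∈ T := by
      by_contra hnone
      push_neg at hnone
      have hle := (hinv (ℓ + 1) (fun i _ => hnone i)).1
      have hge : ℓ + 1 ≤ ∑ i ∈ Finset.range (ℓ + 1), w (ρ i).1 := by
        calc ℓ + 1 = ∑ _i ∈ Finset.range (ℓ + 1), 1 := by simp
        _ ≤ _ := Finset.sum_le_sum fun i _ => hw _
      omega
    unfold tsRun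
    rw [dif_pos hhit]
    have hle := (hinv (Nat.find hhit) (fun i hi => Nat.find_min hhit hi)).1
    exact_mod_cast hle
end
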